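/- arXiv:1005.0725 — 9 statements merged into one kernel-verified Lean document; each statement's English description precedes it below -/
import Mathlib

section
/- For every (g,n)-admissible datum, one has n ≤ 2g + 2. In particular, for every g there are no (g,n)-admissible data when n > 2g + 2. (This is the combinatorial content of the paper's observation that the twisted part I_TW(M_{g,k}) of the inertia stack is empty whenever k > 2g + 2.) -/
/-- A `(g,n)`-admissible datum (Definition 2.2 of the paper): a tuple
`(g', N, d₁, …, d_{N−1}, a₁, …, a_{N−1})` of natural numbers with `N ≥ 2`,
where `d` and `a` are encoded as functions `ℕ → ℕ` vanishing outside `{1, …, N−1}`,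
satisfying the Riemann–Hurwitz formula, the congruence `Σ i·dᵢ ≡ 0 (mod N)`,
`Σ aᵢ = n`, `aᵢ ≤ dᵢ`, and `aᵢ = 0` whenever `gcd(i, N) ≠ 1`. -/
structure AdmissibleDatum (g n : ℕ) where
  g' : ℕ
  N : ℕ
  hN : 2 ≤ N
  d : ℕ → ℕ
  a : ℕ → ℕ
  hd : ∀ i : ℕ, i ∉ Finset.Ico 1 N → d i = 0
  ha : ∀ i : ℕ, i ∉ Finset.Ico 1 N → a i = 0
  hRH : (2 * (g : ℤ) - 2) = (N : ℤ) * (2 * (g' : ℤ) - 2) +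
      ∑ i ∈ Finset.Ico 1 N,
        (d i : ℤ) * (Nat.gcd i N : ℤ) * (((N / Nat.gcd i N : ℕ) : ℤ) - 1)
  hmod : ((∑ i ∈ Finset.Ico 1 N, i * d i : ℕ) : ZMod N) = 0
  hsum : ∑ i ∈ Finset.Ico 1 N, a i = n
  hle : ∀ i : ℕ, a i ≤ d i
  hcop : ∀ i : ℕ, Nat.gcd i N ≠ 1 → a i = 0

/-- For every `(g,n)`-admissible datum one has `n ≤ 2g + 2`; in particular there are no
`(g,n)`-admissible data when `n > 2g + 2`. -/
theorem admissibleDatum_n_le (g n : ℕ) (A : AdmissibleDatum g n) : n ≤ 2 * g + 2 := by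
  obtain ⟨g', N, hN, d, a, hd, ha, hRH, hmod, hsum, hle, hcop⟩ := A
  have hN0 : 0 < N := by omega
  have hterm : ∀ i ∈ Finset.Ico 1 N, (a i : ℤ) * ((N : ℤ) - 1) ≤
      (d i : ℤ) * (Nat.gcd i N : ℤ) * (((N / Nat.gcd i N : ℕ) : ℤ) - 1) := by
    intro i _
    by_cases hg1 : Nat.gcd i N = 1
    · rw [hg1]
      simp only [Nat.cast_one, mul_one, Nat.div_one]
      have h1 : (a i : ℤ) ≤ (d i : ℤ) := by exact_mod_cast hle i
      have h2 : (0 : ℤ) ≤ (N : ℤ) - 1 := by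
        have : (1 : ℤ) ≤ (N : ℤ) := by exact_mod_cast hN0
        linarith
      exact mul_le_mul_of_nonneg_right h1 h2
    · rw [hcop i hg1]
      simp only [Nat.cast_zero, zero_mul]
      have hgpos : 0 < Nat.gcd i N := Nat.gcd_pos_of_pos_right i hN0
      have hdiv : 1 ≤ N / Nat.gcd i N :=
        (Nat.one_le_div_iff hgpos).2 (Nat.le_of_dvd hN0 (Nat.gcd_dvd_right i N))
      have h1 : (1 : ℤ) ≤ ((N / Nat.gcd i N : ℕ) : ℤ) := by exact_mod_cast hdiv
      exact mul_nonneg (mul_nonneg (by positivity) (by positivity)) (by linarith)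
  have hsumle : (n : ℤ) * ((N : ℤ) - 1) ≤
      ∑ i ∈ Finset.Ico 1 N,
        (d i : ℤ) * (Nat.gcd i N : ℤ) * (((N / Nat.gcd i N : ℕ) : ℤ) - 1) := by
    calc (n : ℤ) * ((N : ℤ) - 1)
        = ∑ i ∈ Finset.Ico 1 N, (a i : ℤ) * ((N : ℤ) - 1) := by
          rw [← Finset.sum_mul]
          congr 1
          exact_mod_cast congrArg (Nat.cast (R := ℤ)) hsum.symm
      _ ≤ _ := Finset.sum_le_sum hterm
  have hg'0 : (0 : ℤ) ≤ (g' : ℤ) := by positivity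
  have hNle : (2 : ℤ) ≤ (N : ℤ) := by exact_mod_cast hN
  have hgnn : (0 : ℤ) ≤ (g : ℤ) := by positivity
  have key : (n : ℤ) * ((N : ℤ) - 1) ≤ 2 * (g : ℤ) + 2 * ((N : ℤ) - 1) := by
    nlinarith [hRH, hsumle]
  by_cases hn2 : n ≤ 2
  · omega
  · have hn3 : (3 : ℤ) ≤ (n : ℤ) := by exact_mod_cast (by omega : 3 ≤ n)
    have : ((n : ℤ) - 2) * ((N : ℤ) - 1) ≤ 2 * (g : ℤ) := by nlinarith
    have : (n : ℤ) - 2 ≤ 2 * (g : ℤ) := by nlinarith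
    have : (n : ℤ) ≤ 2 * (g : ℤ) + 2 := by linarith
    exact_mod_cast this
end

section
/- Every (2,n)-admissible datum with g' = 1 has N = 2, d_1 = 2 (and d_i = 0 for all i ≥ 2); consequently a_1 = n and n ≤ 2. (This is the claim, used in the proofs of Propositions 2.11 and 2.12, that in genus 2 the only coverings of genus 1 curves are the double coverings branched at two points, i.e. the twisted sectors II, II_1, II_11.) -/
/-- Every `(2,n)`-admissible datum with `g' = 1` has `N = 2`, `d 1 = 2` (and `d i = 0` for
all `i ≥ 2`); consequently `a 1 = n` and `n ≤ 2`. -/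
theorem admissibleDatum_genus_two_g'_eq_one (n : ℕ) (A : AdmissibleDatum 2 n)
    (h : A.g' = 1) :
    A.N = 2 ∧ A.d 1 = 2 ∧ (∀ i : ℕ, 2 ≤ i → A.d i = 0) ∧ A.a 1 = n ∧ n ≤ 2 := by
  obtain ⟨g', N, hN, d, a, hd, ha, hRH, hmod, hsum, hle, hcop⟩ := A
  simp only at h hRH hmod hsum hle ⊢
  subst h
  haveI : NeZero N := ⟨by omega⟩
  have hdvd : N ∣ ∑ i ∈ Finset.Ico 1 N, i * d i :=
    (ZMod.natCast_eq_zero_iff _ _).mp hmod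
  -- rewrite RH sum into a natural-number sum
  have hS : (∑ i ∈ Finset.Ico 1 N, d i * (N - Nat.gcd i N)) = 2 := by
    have hcast : ∀ i ∈ Finset.Ico 1 N,
        (d i : ℤ) * (Nat.gcd i N : ℤ) * (((N / Nat.gcd i N : ℕ) : ℤ) - 1)
        = ((d i * (N - Nat.gcd i N) : ℕ) : ℤ) := by
      intro i hi
      simp only [Finset.mem_Ico] at hi
      have hg0 : 0 < Nat.gcd i N := Nat.gcd_pos_of_pos_right _ (by omega)
      have hdvd' : Nat.gcd i N ∣ N := Nat.gcd_dvd_right i N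
      have hgle : Nat.gcd i N ≤ N := Nat.le_of_dvd (by omega) hdvd'
      have hmul : Nat.gcd i N * (N / Nat.gcd i N) = N := Nat.mul_div_cancel' hdvd'
      have hmulZ : (Nat.gcd i N : ℤ) * ((N / Nat.gcd i N : ℕ) : ℤ) = (N : ℤ) := by
        exact_mod_cast congrArg (Nat.cast : ℕ → ℤ) hmul
      push_cast [hgle]
      nlinarith [hmulZ]
    rw [Finset.sum_congr rfl hcast, ← Nat.cast_sum] at hRH
    omega
  -- find an index with nonzero contribution, bound N
  have hex : ∃ i ∈ Finset.Ico 1 N, d i * (N - Nat.gcd i N) ≠ 0 := by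
    by_contra hc
    push_neg at hc
    have := Finset.sum_eq_zero hc
    omega
  obtain ⟨i, hi, hine⟩ := hex
  have hi' := Finset.mem_Ico.mp hi
  have hterm_le : d i * (N - Nat.gcd i N) ≤ 2 := by
    have := Finset.single_le_sum (f := fun j => d j * (N - Nat.gcd j N))
      (fun j _ => Nat.zero_le _) hi
    omega
  have hg0 : 0 < Nat.gcd i N := Nat.gcd_pos_of_pos_right _ (by omega)
  have hgi : Nat.gcd i N ≤ i := Nat.le_of_dvd (by omega) (Nat.gcd_dvd_left i N)
  obtain ⟨k, hk⟩ := Nat.gcd_dvd_right i N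
  have hk2 : 2 ≤ k := by nlinarith
  have h2g : 2 * Nat.gcd i N ≤ N := by nlinarith
  have hsub : N - Nat.gcd i N ≤ 2 := by
    have hd1 : 1 ≤ d i := by
      rcases Nat.eq_zero_or_pos (d i) with h0 | h0
      · simp [h0] at hine
      · omega
    nlinarith
  have hN4 : N ≤ 4 := by omega
  clear hmod hterm_le hine hk hk2 hg0 hgi h2g hsub hi hi' hRH
  interval_cases N
  · -- N = 2
    have h12 : Finset.Ico 1 2 = {1} := rfl
    rw [h12, Finset.sum_singleton] at hS hsum
    rw [show Nat.gcd 1 2 = 1 from rfl] at hS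
    refine ⟨rfl, by omega, fun j hj => hd j (by rw [Finset.mem_Ico]; omega), hsum, ?_⟩
    have := hle 1
    omega
  · -- N = 3
    exfalso
    have h13 : Finset.Ico 1 3 = {1, 2} := rfl
    rw [h13] at hS hdvd
    rw [Finset.sum_insert (by decide), Finset.sum_singleton] at hS hdvd
    rw [show Nat.gcd 1 3 = 1 from rfl, show Nat.gcd 2 3 = 1 from rfl] at hS
    omega
  · -- N = 4
    exfalso
    have h14 : Finset.Ico 1 4 = {1, 2, 3} := rfl
    rw [h14] at hS hdvd
    rw [Finset.sum_insert (by decide), Finset.sum_insert (by decide),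
      Finset.sum_singleton] at hS hdvd
    rw [show Nat.gcd 1 4 = 1 from rfl, show Nat.gcd 2 4 = 2 from rfl,
      show Nat.gcd 3 4 = 1 from rfl] at hS
    omega
end

section
/- Every (2,0)-admissible datum with g' = 0 satisfies the connectedness condition gcd(N, {i : d_i ≠ 0}) = 1; that is, the greatest common divisor of N together with all indices i ∈ {1, …, N−1} for which d_i ≠ 0 equals 1. (This is the numerical condition, verified in the proof of Proposition 2.12, equivalent to connectedness of the corresponding cyclic covering of a genus 0 curve; the paper asserts: 'This condition happens to be satisfied by all (2,0)-admissible data.') -/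
/-- Every `(2,0)`-admissible datum with `g' = 0` satisfies the connectedness condition:
the greatest common divisor of `N` together with all indices `i` in `{1, ..., N-1}` for
which `d i ≠ 0` equals `1`. -/
theorem admissibleDatum_two_zero_connected (A : AdmissibleDatum 2 0) (h : A.g' = 0) :
    Nat.gcd A.N (((Finset.Ico 1 A.N).filter (fun i => A.d i ≠ 0)).gcd id) = 1 := by
  classical
  obtain ⟨g', N, hN, d, a, hd, ha, hRH, hmod, hsum, hle, hcop⟩ := A
  dsimp only at h hRH hmod ⊢
  subst h
  set m : ℕ := Nat.gcd N (((Finset.Ico 1 N).filter (fun i => d i ≠ 0)).gcd id) with hm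
  have hmN : m ∣ N := Nat.gcd_dvd_left _ _
  have hmi : ∀ i ∈ Finset.Ico 1 N, d i ≠ 0 → m ∣ i := by
    intro i hi hdi
    exact (Nat.gcd_dvd_right _ _).trans
      (Finset.gcd_dvd (Finset.mem_filter.mpr ⟨hi, hdi⟩))
  -- S = 2N + 2
  have hS : ∑ i ∈ Finset.Ico 1 N,
      (d i : ℤ) * (Nat.gcd i N : ℤ) * (((N / Nat.gcd i N : ℕ) : ℤ) - 1)
      = 2 * (N : ℤ) + 2 := by
    have := hRH
    simp only [Nat.cast_ofNat, Nat.cast_zero] at this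
    linarith
  -- step 1 : m ∣ 2
  have hm2 : m ∣ 2 := by
    have hdvdS : (m : ℤ) ∣ 2 * (N : ℤ) + 2 := by
      rw [← hS]
      refine Finset.dvd_sum ?_
      intro i hi
      by_cases hdi : d i = 0
      · simp [hdi]
      · have : (m : ℤ) ∣ (Nat.gcd i N : ℤ) :=
          Int.natCast_dvd_natCast.mpr (Nat.dvd_gcd (hmi i hi hdi) hmN)
        exact Dvd.dvd.mul_right (this.mul_left _) _
    have h2 : (m : ℤ) ∣ 2 := by
      have h2N' : (m : ℤ) ∣ 2 * (N : ℤ) := (Int.natCast_dvd_natCast.mpr hmN).mul_left 2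
      have := dvd_sub hdvdS h2N'
      simpa using this
    exact_mod_cast h2
  have hNpos : 0 < N := by omega
  rcases (Nat.dvd_prime Nat.prime_two).mp hm2 with h1 | h2
  · exact h1
  exfalso
  -- m = 2 : all support indices even, N even
  have h2N : 2 ∣ N := h2 ▸ hmN
  have h2i : ∀ i ∈ Finset.Ico 1 N, d i ≠ 0 → 2 ∣ i := fun i hi hdi => h2 ▸ hmi i hi hdi
  set T : ℕ := ∑ i ∈ Finset.Ico 1 N, d i * ((N - Nat.gcd i N) / 2) with hT
  have hgcd_le : ∀ i, Nat.gcd i N ≤ N := fun i => Nat.le_of_dvd hNpos (Nat.gcd_dvd_right i N)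
  have hST : ∑ i ∈ Finset.Ico 1 N,
      (d i : ℤ) * (Nat.gcd i N : ℤ) * (((N / Nat.gcd i N : ℕ) : ℤ) - 1)
      = 2 * (T : ℤ) := by
    rw [hT, Nat.cast_sum, Finset.mul_sum]
    refine Finset.sum_congr rfl ?_
    intro i hi
    by_cases hdi : d i = 0
    · simp [hdi]
    · have hg : Nat.gcd i N ∣ N := Nat.gcd_dvd_right i N
      have h2g : 2 ∣ Nat.gcd i N := Nat.dvd_gcd (h2i i hi hdi) h2N
      have h2sub : 2 ∣ (N - Nat.gcd i N) := Nat.dvd_sub h2N h2g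
      have e1 : ((N / Nat.gcd i N : ℕ) : ℤ) * (Nat.gcd i N : ℤ) = (N : ℤ) := by
        exact_mod_cast congrArg (Nat.cast : ℕ → ℤ) (Nat.div_mul_cancel hg)
      have e2 : (2 : ℤ) * (((N - Nat.gcd i N) / 2 : ℕ) : ℤ) = (N : ℤ) - (Nat.gcd i N : ℤ) := by
        have hdiv : 2 * ((N - Nat.gcd i N) / 2 : ℕ) = N - Nat.gcd i N :=
          Nat.mul_div_cancel' h2sub
        have := congrArg (Nat.cast : ℕ → ℤ) hdiv
        rwa [Nat.cast_mul, Nat.cast_sub (hgcd_le i)] at this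
      rw [Nat.cast_mul]
      linear_combination (d i : ℤ) * e1 - (d i : ℤ) * e2
  have hTval : T = N + 1 := by
    have : (T : ℤ) = (N : ℤ) + 1 := by
      rw [hST] at hS; linarith
    exact_mod_cast this
  have hN4 : N % 4 = 0 ∨ N % 4 = 2 := by omega
  rcases hN4 with h4 | h4
  · -- 4 ∣ N case
    set D : ℕ := ∑ i ∈ (Finset.Ico 1 N).filter (fun i => i % 4 = 2), d i with hD
    have hDodd : ¬ (2 ∣ D) := by
      have hcast2 : (T : ZMod 2) = (D : ZMod 2) := by
        rw [hT, hD, Nat.cast_sum, Nat.cast_sum, Finset.sum_filter]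
        refine Finset.sum_congr rfl ?_
        intro i hi
        by_cases hdi : d i = 0
        · simp [hdi]
        · have h2ii : 2 ∣ i := h2i i hi hdi
          have h2g : 2 ∣ Nat.gcd i N := Nat.dvd_gcd h2ii h2N
          have hgi : Nat.gcd i N ∣ i := Nat.gcd_dvd_left i N
          have hgN : Nat.gcd i N ∣ N := Nat.gcd_dvd_right i N
          have hle' := hgcd_le i
          have h4N : 4 ∣ N := by omega
          have hepar : (N - Nat.gcd i N) / 2 % 2 = (if i % 4 = 2 then 1 else 0) := by
            by_cases hi4 : i % 4 = 2
            · have hng : ¬ (4 ∣ Nat.gcd i N) := fun hc => by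
                have := hc.trans hgi; omega
              simp only [hi4, if_pos]
              omega
            · have hi4' : i % 4 = 0 := by omega
              have h4g : 4 ∣ Nat.gcd i N := Nat.dvd_gcd (by omega) h4N
              simp only [if_neg hi4]
              omega
          rw [Nat.cast_mul, ← ZMod.natCast_mod ((N - Nat.gcd i N) / 2) 2, hepar]
          split_ifs with hi4 <;> simp
      have hT2 : (T : ZMod 2) = 1 := by
        rw [hTval]
        push_cast
        rw [(ZMod.natCast_eq_zero_iff N 2).mpr h2N]
        ring
      intro hc
      rw [hcast2, (ZMod.natCast_eq_zero_iff D 2).mpr hc] at hT2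
      exact one_ne_zero hT2.symm
    apply hDodd
    have h4sum : 4 ∣ ∑ i ∈ Finset.Ico 1 N, i * d i := by
      have hNsum : N ∣ ∑ i ∈ Finset.Ico 1 N, i * d i :=
        (ZMod.natCast_eq_zero_iff _ N).mp hmod
      exact (by omega : (4:ℕ) ∣ N).trans hNsum
    have h2D : ((2 * D : ℕ) : ZMod 4) = 0 := by
      have key : ((∑ i ∈ Finset.Ico 1 N, i * d i : ℕ) : ZMod 4) = ((2 * D : ℕ) : ZMod 4) := by
        rw [hD, Nat.cast_mul, Nat.cast_sum, Nat.cast_sum, Finset.mul_sum, Finset.sum_filter]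
        refine Finset.sum_congr rfl ?_
        intro i hi
        by_cases hdi : d i = 0
        · simp [hdi]
        · have h2ii : 2 ∣ i := h2i i hi hdi
          by_cases hi4 : i % 4 = 2
          · rw [if_pos hi4, Nat.cast_mul, ← ZMod.natCast_mod i 4, hi4]
          · have hi4' : i % 4 = 0 := by omega
            rw [if_neg hi4, Nat.cast_mul, ← ZMod.natCast_mod i 4, hi4']
            simp
      rw [← key, (ZMod.natCast_eq_zero_iff _ 4).mpr h4sum]
    have h42D : 4 ∣ 2 * D := (ZMod.natCast_eq_zero_iff _ 4).mp h2D
    omega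
  · -- N % 4 = 2 case : T is even, contradiction with T = N+1 odd
    have h2T : 2 ∣ T := by
      rw [hT]
      refine Finset.dvd_sum ?_
      intro i hi
      by_cases hdi : d i = 0
      · simp [hdi]
      · have h2ii : 2 ∣ i := h2i i hi hdi
        have h2g : 2 ∣ Nat.gcd i N := Nat.dvd_gcd h2ii h2N
        have hgN : Nat.gcd i N ∣ N := Nat.gcd_dvd_right i N
        have h4g : ¬ (4 ∣ Nat.gcd i N) := fun hc => by
          have := hc.trans hgN; omega
        have hle' := hgcd_le i
        have : 2 ∣ (N - Nat.gcd i N) / 2 := by omega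
        exact this.mul_left _
    omega
end

section
/- The number of pairs (A, α), where A is a (2,2)-admissible datum and α is an assignment for A, equals twenty-six. (By Proposition 2.12 of the paper, such pairs correspond bijectively to the twisted sectors of the inertia stack I(M_{2,2}); the paper records this count as 'twenty-six data with n = 2'.) -/
/-- A pair `(A, α)` of a `(g,n)`-admissible datum `A` and an assignment `α` for `A`:
a function `α : {1, ..., n} → {1, ..., N-1}` such that `gcd(α j, N) = 1` for every `j`
and the fiber of `α` over `i` has exactly `a i` elements, for every `i`. -/
structure AssignedDatum (g n : ℕ) where
  A : AdmissibleDatum g n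
  α : Fin n → ℕ
  hmem : ∀ j : Fin n, α j ∈ Finset.Ico 1 A.N
  hαcop : ∀ j : Fin n, Nat.gcd (α j) A.N = 1
  hfiber : ∀ i : ℕ, (Finset.univ.filter (fun j : Fin n => α j = i)).card = A.a i

def EB (N i : ℕ) : ℕ := if 1 ≤ i ∧ i < N then 4 / (N - Nat.gcd i N) + 1 else 1

def Enc := Σ n : Fin 7, Fin 2 × (∀ i : Fin 7, Fin (EB (n.1+2) (i.1+1))) × (Fin 2 → Fin 7)

instance : Fintype Enc := by unfold Enc; infer_instance
instance : DecidableEq Enc := by unfold Enc; exact fun a b => inferInstanceAs (Decidable _)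

def encN (p : Enc) : ℕ := p.1.1 + 2
def encG (p : Enc) : ℕ := p.2.1.1
def encE (p : Enc) : ℕ → ℕ := fun i => if h : 1 ≤ i ∧ i ≤ 7 then (p.2.2.1 ⟨i-1, by omega⟩).1 else 0
def encα (p : Enc) : Fin 2 → ℕ := fun j => (p.2.2.2 j).1 + 1
def encA (p : Enc) : ℕ → ℕ := fun i => (Finset.univ.filter (fun j : Fin 2 => encα p j = i)).card
def encD (p : Enc) : ℕ → ℕ := fun i => if i ∈ Finset.Ico 1 (encN p) then encA p i + encE p i else 0

def P (p : Enc) : Prop :=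
  (∀ j : Fin 2, encα p j < encN p ∧ Nat.gcd (encα p j) (encN p) = 1) ∧
  2 + 2 * encN p = 2 * (encN p * encG p) +
    ∑ i ∈ Finset.Ico 1 (encN p), encD p i * (encN p - Nat.gcd i (encN p)) ∧
  (∑ i ∈ Finset.Ico 1 (encN p), i * encD p i) % encN p = 0

instance : DecidablePred P := fun p => by unfold P; infer_instance

lemma RH_iff (N g' : ℕ) (d : ℕ → ℕ) (hN : 2 ≤ N) :
    ((2 : ℤ) * ((2:ℕ) : ℤ) - 2 = (N : ℤ) * (2 * (g' : ℤ) - 2) +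
      ∑ i ∈ Finset.Ico 1 N, (d i : ℤ) * (Nat.gcd i N : ℤ) * (((N / Nat.gcd i N : ℕ) : ℤ) - 1))
    ↔ 2 + 2 * N = 2 * (N * g') + ∑ i ∈ Finset.Ico 1 N, d i * (N - Nat.gcd i N) := by
  have hterm : ∀ i ∈ Finset.Ico 1 N,
      (d i : ℤ) * (Nat.gcd i N : ℤ) * (((N / Nat.gcd i N : ℕ) : ℤ) - 1)
        = ((d i * (N - Nat.gcd i N) : ℕ) : ℤ) := by
    intro i hi
    rw [Finset.mem_Ico] at hi
    have h1 : Nat.gcd i N ∣ N := Nat.gcd_dvd_right _ _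
    have h3 : Nat.gcd i N * (N / Nat.gcd i N) = N := Nat.mul_div_cancel' h1
    have h4 : Nat.gcd i N ≤ N := Nat.le_of_dvd (by omega) h1
    have h3' : (Nat.gcd i N : ℤ) * ((N / Nat.gcd i N : ℕ) : ℤ) = (N : ℤ) := by exact_mod_cast h3
    rw [Nat.cast_mul, Nat.cast_sub h4]
    linear_combination (d i : ℤ) * h3'
  rw [Finset.sum_congr rfl hterm, ← Nat.cast_sum]
  set S := ∑ i ∈ Finset.Ico 1 N, d i * (N - Nat.gcd i N) with hS
  constructor <;> intro h
  · have h' : ((2 + 2*N : ℕ) : ℤ) = ((2*(N*g') + S : ℕ) : ℤ) := by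
      push_cast
      linear_combination h
    exact_mod_cast h'
  · have h'' := congrArg (Nat.cast : ℕ → ℤ) h
    push_cast at h''
    linear_combination h''

section Bounds
variable (X : AssignedDatum 2 2)

lemma key : 2 + 2 * X.A.N = 2 * (X.A.N * X.A.g') +
    ∑ i ∈ Finset.Ico 1 X.A.N, X.A.d i * (X.A.N - Nat.gcd i X.A.N) :=
  (RH_iff X.A.N X.A.g' X.A.d X.A.hN).mp X.A.hRH

lemma sum_aw : ∑ i ∈ Finset.Ico 1 X.A.N, X.A.a i * (X.A.N - Nat.gcd i X.A.N)
    = 2 * (X.A.N - 1) := by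
  have h : ∀ i ∈ Finset.Ico 1 X.A.N,
      X.A.a i * (X.A.N - Nat.gcd i X.A.N) = X.A.a i * (X.A.N - 1) := by
    intro i _
    by_cases h : Nat.gcd i X.A.N = 1
    · rw [h]
    · rw [X.A.hcop i h]; simp
  rw [Finset.sum_congr rfl h, ← Finset.sum_mul, X.A.hsum, mul_comm]

lemma sum_split : ∑ i ∈ Finset.Ico 1 X.A.N, X.A.d i * (X.A.N - Nat.gcd i X.A.N)
    = 2 * (X.A.N - 1) + ∑ i ∈ Finset.Ico 1 X.A.N, (X.A.d i - X.A.a i) * (X.A.N - Nat.gcd i X.A.N) := by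
  rw [← sum_aw X, ← Finset.sum_add_distrib]
  refine Finset.sum_congr rfl fun i _ => ?_
  have := X.A.hle i
  rw [← add_mul]
  congr 1
  omega

lemma key2 : 2 + 2 * X.A.N = 2 * (X.A.N * X.A.g') + 2 * (X.A.N - 1) +
    ∑ i ∈ Finset.Ico 1 X.A.N, (X.A.d i - X.A.a i) * (X.A.N - Nat.gcd i X.A.N) := by
  have := key X
  rw [sum_split X] at this
  omega

lemma E_eq : ∑ i ∈ Finset.Ico 1 X.A.N, (X.A.d i - X.A.a i) * (X.A.N - Nat.gcd i X.A.N)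
    + 2 * (X.A.N * X.A.g') = 4 := by
  have h := key2 X
  have := X.A.hN
  omega

lemma g'_le : X.A.g' ≤ 1 := by
  have h := E_eq X
  have hN := X.A.hN
  by_contra hg
  have : 2 * X.A.N ≤ X.A.N * X.A.g' := by nlinarith
  omega

lemma term_le : ∀ i ∈ Finset.Ico 1 X.A.N,
    (X.A.d i - X.A.a i) * (X.A.N - Nat.gcd i X.A.N) ≤ 4 := by
  intro i hi
  have h := E_eq X
  have h2 : (X.A.d i - X.A.a i) * (X.A.N - Nat.gcd i X.A.N)
      ≤ ∑ i ∈ Finset.Ico 1 X.A.N, (X.A.d i - X.A.a i) * (X.A.N - Nat.gcd i X.A.N) :=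
    by exact Finset.single_le_sum (f := fun i => (X.A.d i - X.A.a i) * (X.A.N - Nat.gcd i X.A.N))
        (fun i _ => Nat.zero_le _) hi
  omega

lemma two_w : ∀ i ∈ Finset.Ico 1 X.A.N, X.A.N ≤ 2 * (X.A.N - Nat.gcd i X.A.N) := by
  intro i hi
  rw [Finset.mem_Ico] at hi
  obtain ⟨k, hk⟩ := Nat.gcd_dvd_right i X.A.N
  have hle : Nat.gcd i X.A.N ≤ i := Nat.le_of_dvd (by omega) (Nat.gcd_dvd_left i X.A.N)
  have hg0 : 0 < Nat.gcd i X.A.N := Nat.gcd_pos_of_pos_left _ (by omega)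
  have hk2 : 2 ≤ k := by
    rcases Nat.lt_or_ge k 2 with h | h
    · interval_cases k <;> omega
    · exact h
  have h2g : 2 * Nat.gcd i X.A.N ≤ X.A.N := by
    calc 2 * Nat.gcd i X.A.N = Nat.gcd i X.A.N * 2 := by ring
      _ ≤ Nat.gcd i X.A.N * k := Nat.mul_le_mul_left _ hk2
      _ = X.A.N := hk.symm
  omega

lemma N_le : X.A.N ≤ 8 := by
  by_contra h
  push_neg at h
  have hz : ∀ i ∈ Finset.Ico 1 X.A.N,
      (X.A.d i - X.A.a i) * (X.A.N - Nat.gcd i X.A.N) = 0 := by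
    intro i hi
    have h1 := term_le X i hi
    have h2 := two_w X i hi
    rcases Nat.eq_zero_or_pos (X.A.d i - X.A.a i) with h3 | h3
    · rw [h3]; ring
    · exfalso
      have : X.A.N - Nat.gcd i X.A.N ≤ 4 := by
        calc X.A.N - Nat.gcd i X.A.N = 1 * (X.A.N - Nat.gcd i X.A.N) := (one_mul _).symm
          _ ≤ (X.A.d i - X.A.a i) * (X.A.N - Nat.gcd i X.A.N) := by
              exact Nat.mul_le_mul_right _ h3
          _ ≤ 4 := h1
      omega
  have hE := E_eq X
  rw [Finset.sum_eq_zero hz] at hE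
  have : X.A.g' = 0 ∨ 1 ≤ X.A.g' := by omega
  rcases this with h' | h'
  · rw [h'] at hE; omega
  · have : X.A.N ≤ X.A.N * X.A.g' := Nat.le_mul_of_pos_right _ (by omega)
    omega

lemma e_le : ∀ i ∈ Finset.Ico 1 X.A.N,
    X.A.d i - X.A.a i ≤ 4 / (X.A.N - Nat.gcd i X.A.N) := by
  intro i hi
  have h1 := term_le X i hi
  have h2 := two_w X i hi
  have hN := X.A.hN
  have hw : 0 < X.A.N - Nat.gcd i X.A.N := by omega
  exact Nat.le_div_iff_mul_le hw |>.mpr h1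

end Bounds

def encode (X : AssignedDatum 2 2) : Enc :=
  ⟨⟨X.A.N - 2, by have := N_le X; have := X.A.hN; omega⟩,
   ⟨X.A.g', by have := g'_le X; omega⟩,
   fun i => ⟨X.A.d (i.1+1) - X.A.a (i.1+1), by
      have hN2 : X.A.N - 2 + 2 = X.A.N := by have := X.A.hN; omega
      rw [hN2]
      unfold EB
      split_ifs with h
      · have := e_le X (i.1+1) (Finset.mem_Ico.mpr ⟨by omega, h.2⟩)
        omega
      · have h1 : (i.1+1) ∉ Finset.Ico 1 X.A.N := by
          rw [Finset.mem_Ico]; omega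
        rw [X.A.hd _ h1]
        omega⟩,
   fun j => ⟨X.α j - 1, by
      have h1 := X.hmem j
      rw [Finset.mem_Ico] at h1
      have := N_le X
      omega⟩⟩

lemma encα_encode (X : AssignedDatum 2 2) : encα (encode X) = X.α := by
  funext j
  have h1 := X.hmem j
  rw [Finset.mem_Ico] at h1
  show (X.α j - 1) + 1 = X.α j
  omega

lemma encN_encode (X : AssignedDatum 2 2) : encN (encode X) = X.A.N := by
  show X.A.N - 2 + 2 = X.A.N
  have := X.A.hN; omega

lemma encA_encode (X : AssignedDatum 2 2) : encA (encode X) = X.A.a := by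
  funext i
  show (Finset.univ.filter (fun j : Fin 2 => encα (encode X) j = i)).card = X.A.a i
  rw [encα_encode]
  exact X.hfiber i

lemma encD_encode (X : AssignedDatum 2 2) : encD (encode X) = X.A.d := by
  funext i
  show (if i ∈ Finset.Ico 1 (encN (encode X)) then encA (encode X) i + encE (encode X) i else 0) = X.A.d i
  rw [encN_encode, encA_encode]
  split_ifs with h
  · have hmem := h
    rw [Finset.mem_Ico] at hmem
    have h7 : i ≤ 7 := by have := N_le X; omega
    have : encE (encode X) i = X.A.d i - X.A.a i := by
      show (if h : 1 ≤ i ∧ i ≤ 7 then _ else 0) = _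
      rw [dif_pos ⟨hmem.1, h7⟩]
      show X.A.d (i - 1 + 1) - X.A.a (i - 1 + 1) = X.A.d i - X.A.a i
      congr 2 <;> omega
    rw [this]
    have := X.A.hle i
    omega
  · exact (X.A.hd i h).symm

lemma P_encode (X : AssignedDatum 2 2) : P (encode X) := by
  refine ⟨?_, ?_, ?_⟩
  · intro j
    rw [encα_encode, encN_encode]
    have h1 := X.hmem j
    rw [Finset.mem_Ico] at h1
    exact ⟨h1.2, X.hαcop j⟩
  · rw [encN_encode, encD_encode]
    exact key X
  · rw [encN_encode, encD_encode]
    have h := X.A.hmod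
    rw [ZMod.natCast_eq_zero_iff] at h
    exact Nat.mod_eq_zero_of_dvd h

lemma encα_pos (p : Enc) (j : Fin 2) : 1 ≤ encα p j := Nat.le_add_left 1 _

lemma encA_eq_zero (p : Enc) (hp : P p) (i : ℕ) (hi : i ∉ Finset.Ico 1 (encN p)) :
    encA p i = 0 := by
  unfold encA
  rw [Finset.card_eq_zero, Finset.filter_eq_empty_iff]
  intro j _ h
  exact hi (h ▸ Finset.mem_Ico.mpr ⟨encα_pos p j, (hp.1 j).1⟩)

def decode (p : Enc) (hp : P p) : AssignedDatum 2 2 where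
  A := { g' := encG p
         N := encN p
         hN := Nat.le_add_left 2 _
         d := encD p
         a := encA p
         hd := fun _ hi => if_neg hi
         ha := fun i hi => encA_eq_zero p hp i hi
         hRH := (RH_iff (encN p) (encG p) (encD p) (Nat.le_add_left 2 _)).mpr hp.2.1
         hmod := by
           rw [ZMod.natCast_eq_zero_iff]
           exact Nat.dvd_of_mod_eq_zero hp.2.2
         hsum := by
           have h : ∀ j ∈ (Finset.univ : Finset (Fin 2)), encα p j ∈ Finset.Ico 1 (encN p) :=
             fun j _ => Finset.mem_Ico.mpr ⟨encα_pos p j, (hp.1 j).1⟩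
           have h2 := Finset.card_eq_sum_card_fiberwise h
           simpa [encA] using h2.symm
         hle := fun i => by
           by_cases h : i ∈ Finset.Ico 1 (encN p)
           · show encA p i ≤ encD p i
             unfold encD
             rw [if_pos h]
             exact Nat.le_add_right _ _
           · rw [encA_eq_zero p hp i h]
             exact Nat.zero_le _
         hcop := fun i hgcd => by
           by_contra h
           have hne : (Finset.univ.filter (fun j : Fin 2 => encα p j = i)).Nonempty :=
             Finset.card_pos.mp (Nat.pos_of_ne_zero h)
           obtain ⟨j, hj⟩ := hne
           exact hgcd ((Finset.mem_filter.mp hj).2 ▸ (hp.1 j).2) }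
  α := encα p
  hmem := fun j => Finset.mem_Ico.mpr ⟨encα_pos p j, (hp.1 j).1⟩
  hαcop := fun j => (hp.1 j).2
  hfiber := fun _ => rfl

private lemma admEq {A B : AdmissibleDatum 2 2} (h1 : A.g' = B.g') (h2 : A.N = B.N)
    (h3 : A.d = B.d) (h4 : A.a = B.a) : A = B := by
  cases A; cases B
  dsimp at h1 h2 h3 h4
  subst h1; subst h2; subst h3; subst h4
  rfl

private lemma asgEq {X Y : AssignedDatum 2 2} (h1 : X.A = Y.A) (h2 : X.α = Y.α) : X = Y := by
  cases X; cases Y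
  dsimp at h1 h2
  subst h1; subst h2
  rfl

lemma decode_encode (X : AssignedDatum 2 2) : decode (encode X) (P_encode X) = X := by
  apply asgEq
  · exact admEq rfl (encN_encode X) (encD_encode X) (encA_encode X)
  · exact encα_encode X

lemma encode_decode (p : Enc) (hp : P p) : encode (decode p hp) = p := by
  obtain ⟨n, g, e, al⟩ := p
  have h2 : (encode (decode ⟨n,g,e,al⟩ hp)).2.2.1 = e := by
    funext i
    apply Fin.ext
    show encD ⟨n,g,e,al⟩ (i.1+1) - encA ⟨n,g,e,al⟩ (i.1+1) = (e i).1
    by_cases h : i.1+1 < n.1+2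
    · have hmem : i.1+1 ∈ Finset.Ico 1 (encN ⟨n,g,e,al⟩) := Finset.mem_Ico.mpr ⟨by omega, h⟩
      have hD : encD ⟨n,g,e,al⟩ (i.1+1)
          = encA ⟨n,g,e,al⟩ (i.1+1) + encE ⟨n,g,e,al⟩ (i.1+1) := by
        unfold encD; rw [if_pos hmem]
      have hE : encE ⟨n,g,e,al⟩ (i.1+1) = (e i).1 := by
        unfold encE
        rw [dif_pos ⟨by omega, by omega⟩]
        rfl
      rw [hD, hE]
      omega
    · have hD : encD ⟨n,g,e,al⟩ (i.1+1) = 0 := by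
        unfold encD
        rw [if_neg]
        simp only [Finset.mem_Ico, encN]
        omega
      have hEB : EB ((n:ℕ)+2) ((i:ℕ)+1) = 1 := by
        unfold EB
        rw [if_neg (show ¬(1 ≤ (i:ℕ)+1 ∧ (i:ℕ)+1 < (n:ℕ)+2) by omega)]
      have hb : (e i).1 < 1 := lt_of_lt_of_eq (e i).2 hEB
      omega
  refine Eq.trans (b := (⟨n, g, (encode (decode ⟨n,g,e,al⟩ hp)).2.2.1, al⟩ : Enc)) rfl ?_
  rw [h2]

def equivEnc : {p : Enc // P p} ≃ AssignedDatum 2 2 where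
  toFun x := decode x.1 x.2
  invFun X := ⟨encode X, P_encode X⟩
  left_inv x := Subtype.ext (encode_decode x.1 x.2)
  right_inv X := decode_encode X

set_option maxRecDepth 40000 in
/-- The number of pairs `(A, α)`, where `A` is a `(2,2)`-admissible datum and `α` is an
assignment for `A`, equals twenty-six. -/
theorem card_assignedDatum_two_two : Nat.card (AssignedDatum 2 2) = 26 := by
  rw [← Nat.card_congr equivEnc, Nat.card_eq_fintype_card]
  decide
end

section
/- The number of pairs (A, α), where A is a (2,4)-admissible datum and α is an assignment for A, equals seven. (By Proposition 2.12 of the paper, such pairs correspond bijectively to the twisted sectors of the inertia stack I(M_{2,4}); the paper records this count as 'seven data with n = 4'.) -/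
namespace Aux

theorem assigned_ext {g n : ℕ} {x y : AssignedDatum g n}
    (h1 : x.A.g' = y.A.g') (h2 : x.A.N = y.A.N) (h3 : x.A.d = y.A.d)
    (h4 : x.A.a = y.A.a) (h5 : x.α = y.α) : x = y := by
  obtain ⟨⟨g1, N1, hN1, d1, a1, p1, p2, p3, p4, p5, p6, p7⟩, α1, q1, q2, q3⟩ := x
  obtain ⟨⟨g2, N2, hN2, d2, a2, r1, r2, r3, r4, r5, r6, r7⟩, α2, s1, s2, s3⟩ := y
  simp only at h1 h2 h3 h4 h5
  subst h1; subst h2; subst h3; subst h4; subst h5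
  rfl

/-- The classification of (2,4)-admissible data carrying an assignment. -/
theorem classify (x : AssignedDatum 2 4) :
    (x.A.g' = 0 ∧ x.A.N = 2 ∧ x.A.d = (fun i => if i = 1 then 6 else 0) ∧
      x.A.a = (fun i => if i = 1 then 4 else 0)) ∨
    (x.A.g' = 0 ∧ x.A.N = 3 ∧ x.A.d = (fun i => if i = 1 ∨ i = 2 then 2 else 0) ∧
      x.A.a = (fun i => if i = 1 ∨ i = 2 then 2 else 0)) := by
  obtain ⟨⟨g', N, hN, d, a, hd, ha, hRH, hmod, hsum, hle, hcop⟩, α, hmem, hαcop, hfiber⟩ := x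
  simp only at hRH hmod hsum ⊢
  set C : Finset ℕ := (Finset.Ico 1 N).filter (fun i => Nat.gcd i N = 1) with hC
  have e1 : ∑ i ∈ C, a i = 4 := by
    rw [hC, Finset.sum_filter_of_ne, hsum]
    intro i _ hne
    by_contra h
    exact hne (hcop i h)
  have h4 : 4 ≤ ∑ i ∈ C, d i := by
    rw [← e1]
    exact Finset.sum_le_sum fun i _ => hle i
  have hgcdpos : ∀ i, 0 < Nat.gcd i N := fun i => Nat.gcd_pos_of_pos_right i (by omega)
  have hdivge : ∀ i, 1 ≤ N / Nat.gcd i N := fun i =>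
    (Nat.one_le_div_iff (hgcdpos i)).2 (Nat.le_of_dvd (by omega) (Nat.gcd_dvd_right i N))
  have hbound : 4 * ((N : ℤ) - 1) ≤
      ∑ i ∈ Finset.Ico 1 N, (d i : ℤ) * (Nat.gcd i N : ℤ) * (((N / Nat.gcd i N : ℕ) : ℤ) - 1) := by
    have key : ∑ i ∈ C, (d i : ℤ) * ((N : ℤ) - 1) =
        ∑ i ∈ C, (d i : ℤ) * (Nat.gcd i N : ℤ) * (((N / Nat.gcd i N : ℕ) : ℤ) - 1) := by
      refine Finset.sum_congr rfl fun i hi => ?_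
      have hco : Nat.gcd i N = 1 := (Finset.mem_filter.mp hi).2
      rw [hco]
      push_cast [Nat.div_one]
      ring
    have step : ∑ i ∈ C, (d i : ℤ) * (Nat.gcd i N : ℤ) * (((N / Nat.gcd i N : ℕ) : ℤ) - 1) ≤
        ∑ i ∈ Finset.Ico 1 N, (d i : ℤ) * (Nat.gcd i N : ℤ) * (((N / Nat.gcd i N : ℕ) : ℤ) - 1) := by
      refine Finset.sum_le_sum_of_subset_of_nonneg (Finset.filter_subset _ _) fun i _ _ => ?_
      have : (1 : ℤ) ≤ ((N / Nat.gcd i N : ℕ) : ℤ) := by exact_mod_cast hdivge i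
      have h1 : (0 : ℤ) ≤ (d i : ℤ) * (Nat.gcd i N : ℤ) :=
        mul_nonneg (Int.natCast_nonneg _) (Int.natCast_nonneg _)
      nlinarith
    calc 4 * ((N : ℤ) - 1) ≤ (∑ i ∈ C, (d i : ℤ)) * ((N : ℤ) - 1) := by
          have h4' : (4 : ℤ) ≤ ∑ i ∈ C, (d i : ℤ) := by exact_mod_cast h4
          have hN' : (0 : ℤ) ≤ (N : ℤ) - 1 := by
            have : (2 : ℤ) ≤ (N : ℤ) := by exact_mod_cast hN
            linarith
          exact mul_le_mul_of_nonneg_right h4' hN'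
      _ = ∑ i ∈ C, (d i : ℤ) * ((N : ℤ) - 1) := by rw [Finset.sum_mul]
      _ = _ := key
      _ ≤ _ := step
  have hNZ : (2 : ℤ) ≤ (N : ℤ) := by exact_mod_cast hN
  simp only [Nat.cast_ofNat] at hRH
  have hg0 : g' = 0 := by
    by_contra h
    have h1 : (1 : ℤ) ≤ (g' : ℤ) := by exact_mod_cast Nat.one_le_iff_ne_zero.2 h
    have hnn : (0 : ℤ) ≤ (N : ℤ) * (2 * (g' : ℤ) - 2) :=
      mul_nonneg (by linarith) (by linarith)
    linarith [hRH, hbound]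
  have hN3 : N = 2 ∨ N = 3 := by
    rw [hg0] at hRH
    simp only [Nat.cast_zero] at hRH
    have : (N : ℤ) ≤ 3 := by linarith [hRH, hbound]
    have : N ≤ 3 := by exact_mod_cast this
    omega
  rcases hN3 with h2 | h3
  · -- N = 2 case
    left
    subst h2
    subst hg0
    have hIco : Finset.Ico 1 2 = {1} := rfl
    rw [hIco] at hRH hsum
    simp only [Finset.sum_singleton] at hRH hsum
    have hgcd : Nat.gcd 1 2 = 1 := rfl
    rw [hgcd] at hRH
    norm_num at hRH
    have hd1 : d 1 = 6 := by omega
    refine ⟨rfl, rfl, funext fun i => ?_, funext fun i => ?_⟩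
    · by_cases h : i = 1
      · simp [h, hd1]
      · rw [if_neg h]
        exact hd i (by simp [Finset.mem_Ico]; omega)
    · by_cases h : i = 1
      · simp [h, hsum]
      · rw [if_neg h]
        exact ha i (by simp [Finset.mem_Ico]; omega)
  · -- N = 3 case
    right
    subst h3
    subst hg0
    have hIco : Finset.Ico 1 3 = {1, 2} := rfl
    rw [hIco] at hRH hsum hmod
    rw [Finset.sum_pair (by norm_num : (1:ℕ) ≠ 2)] at hRH hsum hmod
    have hg1 : Nat.gcd 1 3 = 1 := rfl
    have hg2 : Nat.gcd 2 3 = 1 := rfl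
    rw [hg1, hg2] at hRH
    norm_num at hRH
    have hdvd : (3 : ℕ) ∣ 1 * d 1 + 2 * d 2 :=
      (ZMod.natCast_eq_zero_iff _ 3).1 hmod
    have hsum' : d 1 + d 2 = 4 := by omega
    have hd1 : d 1 = 2 ∧ d 2 = 2 := by omega
    have ha1 : a 1 = 2 ∧ a 2 = 2 := by
      have := hle 1; have := hle 2; omega
    refine ⟨rfl, rfl, funext fun i => ?_, funext fun i => ?_⟩
    · by_cases h : i = 1 ∨ i = 2
      · rcases h with h | h <;> simp [h, hd1.1, hd1.2]
      · rw [if_neg h]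
        exact hd i (by simp [Finset.mem_Ico]; omega)
    · by_cases h : i = 1 ∨ i = 2
      · rcases h with h | h <;> simp [h, ha1.1, ha1.2]
      · rw [if_neg h]
        exact ha i (by simp [Finset.mem_Ico]; omega)

/-- The admissible datum with `N = 2`. -/
def A2 : AdmissibleDatum 2 4 where
  g' := 0
  N := 2
  hN := by norm_num
  d := fun i => if i = 1 then 6 else 0
  a := fun i => if i = 1 then 4 else 0
  hd := by intro i hi; show (if i = 1 then 6 else 0) = 0; rw [if_neg]; rintro rfl; exact hi (by decide)
  ha := by intro i hi; show (if i = 1 then 4 else 0) = 0; rw [if_neg]; rintro rfl; exact hi (by decide)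
  hRH := by decide
  hmod := by decide
  hsum := by decide
  hle := by intro i; show (if i = 1 then 4 else 0) ≤ (if i = 1 then 6 else 0); split <;> omega
  hcop := by intro i h; show (if i = 1 then 4 else 0) = 0; rw [if_neg]; rintro rfl; exact h rfl

/-- The admissible datum with `N = 3`. -/
def A3 : AdmissibleDatum 2 4 where
  g' := 0
  N := 3
  hN := by norm_num
  d := fun i => if i = 1 ∨ i = 2 then 2 else 0
  a := fun i => if i = 1 ∨ i = 2 then 2 else 0
  hd := by intro i hi; show (if i = 1 ∨ i = 2 then 2 else 0) = 0; rw [if_neg]; rintro (rfl | rfl) <;> exact hi (by decide)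
  ha := by intro i hi; show (if i = 1 ∨ i = 2 then 2 else 0) = 0; rw [if_neg]; rintro (rfl | rfl) <;> exact hi (by decide)
  hRH := by decide
  hmod := by decide
  hsum := by decide
  hle := by intro i; exact le_refl _
  hcop := by intro i h; show (if i = 1 ∨ i = 2 then 2 else 0) = 0; rw [if_neg]; rintro (rfl | rfl) <;> exact h rfl

abbrev TwoSet := {s : Finset (Fin 4) // s.card = 2}

/-- The assigned datum corresponding to `N = 2`. -/
def Y2 : AssignedDatum 2 4 where
  A := A2
  α := fun _ => 1
  hmem := by intro j; show (1 : ℕ) ∈ Finset.Ico 1 2; decide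
  hαcop := by intro j; show Nat.gcd 1 2 = 1; decide
  hfiber := by
    intro i
    by_cases h : i = 1
    · subst h; simp [A2]
    · rw [show A2.a i = 0 from if_neg h]
      rw [Finset.card_eq_zero, Finset.filter_eq_empty_iff]
      intro j _
      exact fun hji => h hji.symm

/-- The assigned datum corresponding to `N = 3` and a two-element fiber over `2`. -/
def Y3 (s : TwoSet) : AssignedDatum 2 4 where
  A := A3
  α := fun j => if j ∈ s.1 then 2 else 1
  hmem := by intro j; show (if j ∈ s.1 then 2 else 1) ∈ Finset.Ico 1 3; split <;> decide
  hαcop := by intro j; show Nat.gcd (if j ∈ s.1 then 2 else 1) 3 = 1; split <;> decide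
  hfiber := by
    intro i
    by_cases h1 : i = 1
    · subst h1
      have : (Finset.univ.filter fun j : Fin 4 => (if j ∈ s.1 then 2 else 1) = 1) = s.1ᶜ := by
        ext j; by_cases h : j ∈ s.1 <;> simp [h]
      rw [this, show A3.a 1 = 2 from rfl, Finset.card_compl, s.2]
      rfl
    · by_cases h2 : i = 2
      · subst h2
        have : (Finset.univ.filter fun j : Fin 4 => (if j ∈ s.1 then 2 else 1) = 2) = s.1 := by
          ext j; by_cases h : j ∈ s.1 <;> simp [h]
        rw [this, s.2]; rfl
      · have : (Finset.univ.filter fun j : Fin 4 => (if j ∈ s.1 then 2 else 1) = i) = ∅ := by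
          rw [Finset.filter_eq_empty_iff]
          intro j _
          show ¬ (if j ∈ s.1 then 2 else 1) = i
          split <;> [exact fun hh => h2 hh.symm; exact fun hh => h1 hh.symm]
        rw [this, show A3.a i = 0 from if_neg (by tauto)]
        rfl

/-- Forward map: read off the fiber of `α` over `2`. -/
def F (x : AssignedDatum 2 4) : Option TwoSet :=
  if h : x.A.N = 2 then none
  else some ⟨Finset.univ.filter (fun j : Fin 4 => x.α j = 2), by
    rcases classify x with ⟨_, hN, _, ha⟩ | ⟨_, _, _, ha⟩
    · exact absurd hN h
    · rw [x.hfiber 2, ha]; decide⟩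

theorem left_inv : ∀ t : Option TwoSet, F (match t with | none => Y2 | some s => Y3 s) = t := by
  rintro (_ | ⟨s, hs⟩)
  · rfl
  · show F (Y3 ⟨s, hs⟩) = _
    have hne : ¬ (Y3 ⟨s, hs⟩).A.N = 2 := by intro h; exact absurd h (by decide : ¬ (3 : ℕ) = 2)
    rw [F, dif_neg hne]
    congr 1
    refine Subtype.ext ?_
    show (Finset.univ.filter fun j : Fin 4 => (if j ∈ s then 2 else 1) = 2) = s
    ext j; by_cases h : j ∈ s <;> simp [h]

theorem right_inv : ∀ x : AssignedDatum 2 4,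
    (match F x with | none => Y2 | some s => Y3 s) = x := by
  intro x
  rcases classify x with ⟨hg, hN, hdd, haa⟩ | ⟨hg, hN, hdd, haa⟩
  · rw [F, dif_pos hN]
    refine (assigned_ext ?_ ?_ ?_ ?_ ?_).symm
    · exact hg
    · exact hN
    · exact hdd
    · exact haa
    · funext j
      have := x.hmem j
      rw [hN] at this
      simp only [Finset.mem_Ico] at this
      show x.α j = 1
      omega
  · rw [F, dif_neg (by omega : ¬ x.A.N = 2)]
    refine (assigned_ext ?_ ?_ ?_ ?_ ?_).symm
    · exact hg
    · exact hN
    · exact hdd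
    · exact haa
    · funext j
      have hm := x.hmem j
      rw [hN] at hm
      simp only [Finset.mem_Ico] at hm
      show x.α j = if j ∈ Finset.univ.filter (fun j : Fin 4 => x.α j = 2) then 2 else 1
      simp only [Finset.mem_filter, Finset.mem_univ, true_and]
      by_cases h : x.α j = 2
      · rw [if_pos h, h]
      · rw [if_neg h]; omega

/-- The equivalence between assigned data and `Option TwoSet`. -/
def theEquiv : AssignedDatum 2 4 ≃ Option TwoSet where
  toFun := F
  invFun := fun t => match t with | none => Y2 | some s => Y3 s
  left_inv := right_inv
  right_inv := left_inv

end Aux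

/-- The number of pairs `(A, α)`, where `A` is a `(2,4)`-admissible datum and `α` is an
assignment for `A`, equals seven. -/
theorem card_assignedDatum_two_four : Nat.card (AssignedDatum 2 4) = 7 := by
  rw [Nat.card_congr Aux.theEquiv, Nat.card_eq_fintype_card]
  decide
end

section
/- There is exactly one (2,5)-admissible datum, namely g' = 0, N = 2, d_1 = 6, a_1 = 5. (This is the paper's count 'only one for n = 5', corresponding to the twisted sector τ_{11111}, the hyperelliptic locus with five Weierstrass points marked.) -/
lemma AdmissibleDatum.ext' {g n : ℕ} {A B : AdmissibleDatum g n}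
    (h1 : A.g' = B.g') (h2 : A.N = B.N) (h3 : A.d = B.d) (h4 : A.a = B.a) : A = B := by
  cases A; cases B
  cases h1; cases h2; cases h3; cases h4; rfl

lemma key_s11 (A : AdmissibleDatum 2 5) : A.g' = 0 ∧ A.N = 2 ∧ A.d 1 = 6 ∧ A.a 1 = 5 := by
  have hN := A.hN
  have hS : (5 : ℤ) * ((A.N : ℤ) - 1) ≤
      ∑ i ∈ Finset.Ico 1 A.N,
        (A.d i : ℤ) * (Nat.gcd i A.N : ℤ) * (((A.N / Nat.gcd i A.N : ℕ) : ℤ) - 1) := by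
    have h5 : ((∑ i ∈ Finset.Ico 1 A.N, A.a i : ℕ) : ℤ) = 5 := by rw [A.hsum]; norm_num
    calc (5 : ℤ) * ((A.N : ℤ) - 1)
        = ∑ i ∈ Finset.Ico 1 A.N, (A.a i : ℤ) * ((A.N : ℤ) - 1) := by
          rw [← Finset.sum_mul, ← h5]; push_cast; ring
      _ ≤ _ := by
          apply Finset.sum_le_sum
          intro i hi
          rcases eq_or_ne (Nat.gcd i A.N) 1 with hg | hg
          · rw [hg]
            simp only [Nat.cast_one, mul_one, Nat.div_one]
            have := A.hle i
            have hN1 : (0:ℤ) ≤ (A.N : ℤ) - 1 := by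
              have : (2:ℤ) ≤ A.N := by exact_mod_cast hN
              linarith
            have : (A.a i : ℤ) ≤ A.d i := by exact_mod_cast this
            exact mul_le_mul_of_nonneg_right this hN1
          · rw [A.hcop i hg]
            simp only [Nat.cast_zero, zero_mul]
            have hNpos : 0 < A.N := by omega
            have hgpos : 0 < Nat.gcd i A.N := Nat.gcd_pos_of_pos_right _ hNpos
            have hdvd : Nat.gcd i A.N ∣ A.N := Nat.gcd_dvd_right _ _
            have h1 : 1 ≤ A.N / Nat.gcd i A.N :=
              Nat.one_le_div_iff hgpos |>.mpr (Nat.le_of_dvd hNpos hdvd)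
            have : (1:ℤ) ≤ ((A.N / Nat.gcd i A.N : ℕ) : ℤ) := by exact_mod_cast h1
            have hd0 : (0:ℤ) ≤ (A.d i : ℤ) := Int.natCast_nonneg _
            have hg0 : (0:ℤ) ≤ (Nat.gcd i A.N : ℤ) := Int.natCast_nonneg _
            exact mul_nonneg (mul_nonneg hd0 hg0) (by linarith)
  have hRH := A.hRH
  have hNZ : (2:ℤ) ≤ (A.N : ℤ) := by exact_mod_cast hN
  have hg'nn : (0:ℤ) ≤ (A.g' : ℤ) := by positivity
  rw [show 2*((2:ℕ):ℤ)-2 = 2 by norm_num] at hRH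
  have hkey : (A.N : ℤ) * (2 * (A.g' : ℤ) - 2) + 5 * ((A.N : ℤ) - 1) ≤ 2 := by linarith
  have hg0 : A.g' = 0 := by
    by_contra h
    have : (1:ℤ) ≤ (A.g' : ℤ) := by exact_mod_cast Nat.one_le_iff_ne_zero.mpr h
    nlinarith
  have hN2 : A.N = 2 := by
    rw [hg0] at hkey
    push_cast at hkey
    omega
  refine ⟨hg0, hN2, ?_, ?_⟩
  · have := A.hRH
    rw [hg0, hN2] at this
    simp [Finset.sum_Ico_eq_sum_range] at this
    omega
  · have := A.hsum
    rw [hN2] at this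
    simpa [Finset.sum_Ico_eq_sum_range] using this


/-- There is exactly one `(2,5)`-admissible datum, namely `g' = 0`, `N = 2`, `d 1 = 6`,
`a 1 = 5`. -/
theorem admissibleDatum_two_five_unique :
    Nat.card (AdmissibleDatum 2 5) = 1 ∧
    ∀ A : AdmissibleDatum 2 5, A.g' = 0 ∧ A.N = 2 ∧ A.d 1 = 6 ∧ A.a 1 = 5 := by
  refine ⟨?_, key_s11⟩
  have W : AdmissibleDatum 2 5 :=
    { g' := 0, N := 2, hN := le_refl 2,
      d := fun i => if i = 1 then 6 else 0,
      a := fun i => if i = 1 then 5 else 0,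
      hd := by intro i hi; simp at hi; have : i ≠ 1 := by omega
               simp [this],
      ha := by intro i hi; simp at hi; have : i ≠ 1 := by omega
               simp [this],
      hRH := by decide,
      hmod := by decide,
      hsum := by decide,
      hle := by intro i; by_cases h : i = 1 <;> simp [h],
      hcop := by intro i hi
                 have : i ≠ 1 := by rintro rfl; simp at hi
                 simp [this] }
  rw [Nat.card_eq_one_iff_unique]
  constructor
  · constructor
    intro A B
    obtain ⟨hAg, hAN, hAd, hAa⟩ := key_s11 A
    obtain ⟨hBg, hBN, hBd, hBa⟩ := key_s11 B
    apply AdmissibleDatum.ext' (by rw [hAg, hBg]) (by rw [hAN, hBN])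
    · funext i
      rcases eq_or_ne i 1 with rfl | hi
      · rw [hAd, hBd]
      · rw [A.hd i, B.hd i] <;> simp [hAN, hBN] <;> omega
    · funext i
      rcases eq_or_ne i 1 with rfl | hi
      · rw [hAa, hBa]
      · rw [A.ha i, B.ha i] <;> simp [hAN, hBN] <;> omega
  · exact ⟨W⟩
end

section
/- There is exactly one (2,6)-admissible datum, namely g' = 0, N = 2, d_1 = 6, a_1 = 6. (This is the paper's count 'only one for n = 6', corresponding to the twisted sector τ_{111111}, the hyperelliptic locus with all six Weierstrass points marked.) -/
lemma myNeq (A : AdmissibleDatum 2 6) : A.N = 2 := by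
  have hN := A.hN
  have h6 : (∑ i ∈ Finset.Ico 1 A.N, (A.a i : ℤ)) = 6 := by exact_mod_cast A.hsum
  have key : (6 : ℤ) * ((A.N : ℤ) - 1) ≤ ∑ i ∈ Finset.Ico 1 A.N,
      (A.d i : ℤ) * (Nat.gcd i A.N : ℤ) * (((A.N / Nat.gcd i A.N : ℕ) : ℤ) - 1) := by
    rw [show (6:ℤ) * ((A.N : ℤ) - 1) = ∑ i ∈ Finset.Ico 1 A.N, (A.a i : ℤ) * ((A.N:ℤ) - 1) by
      rw [← Finset.sum_mul, h6]]
    apply Finset.sum_le_sum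
    intro i hi
    simp only [Finset.mem_Ico] at hi
    by_cases hg : Nat.gcd i A.N = 1
    · have hle : (A.a i : ℤ) ≤ A.d i := by exact_mod_cast A.hle i
      rw [hg]
      simp only [Nat.cast_one, Nat.div_one, mul_one]
      have hN1 : (1:ℤ) ≤ (A.N : ℤ) := by exact_mod_cast le_trans (by norm_num) hN
      nlinarith
    · rw [A.hcop i hg]
      simp only [Nat.cast_zero, zero_mul]
      have hg0 : 0 < Nat.gcd i A.N := Nat.gcd_pos_of_pos_left _ (by omega)
      have h1 : 1 ≤ A.N / Nat.gcd i A.N :=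
        (Nat.one_le_div_iff hg0).mpr (Nat.gcd_le_right _ (by omega))
      have : (1:ℤ) ≤ ((A.N / Nat.gcd i A.N : ℕ) : ℤ) := by exact_mod_cast h1
      have : (0:ℤ) ≤ ((A.N / Nat.gcd i A.N : ℕ) : ℤ) - 1 := by linarith
      positivity
  have hRH := A.hRH
  have hg0 : (0:ℤ) ≤ (A.g' : ℤ) := by positivity
  have hN0 : (0:ℤ) ≤ (A.N : ℤ) := by positivity
  set S := ∑ i ∈ Finset.Ico 1 A.N,
      (A.d i : ℤ) * (Nat.gcd i A.N : ℤ) * (((A.N / Nat.gcd i A.N : ℕ) : ℤ) - 1) with hS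
  norm_num at hRH
  have hN2 : (A.N : ℤ) ≤ 2 := by nlinarith [mul_nonneg hN0 hg0]
  have : A.N ≤ 2 := by exact_mod_cast hN2
  omega

lemma mychar (A : AdmissibleDatum 2 6) : A.g' = 0 ∧ A.N = 2 ∧ A.d 1 = 6 ∧ A.a 1 = 6 := by
  have hN2 := myNeq A
  have hs : A.a 1 = 6 := by
    have := A.hsum; rw [hN2] at this; simpa using this
  have hle := A.hle 1
  have hRH := A.hRH
  rw [hN2] at hRH
  simp [Finset.sum_Ico_eq_sum_range] at hRH
  -- hRH should be: 2 = 2*(2*g'-2) + d 1 * 1 * (2-1)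
  have hd1 : (A.d 1 : ℤ) + 4 * (A.g' : ℤ) = 6 := by linarith
  have hd1' : A.d 1 + 4 * A.g' = 6 := by exact_mod_cast hd1
  refine ⟨by omega, hN2, by omega, hs⟩

def myA0 : AdmissibleDatum 2 6 where
  g' := 0
  N := 2
  hN := le_refl 2
  d := fun i => if i = 1 then 6 else 0
  a := fun i => if i = 1 then 6 else 0
  hd := by
    intro i hi
    simp only [Finset.mem_Ico] at hi
    have h : i ≠ 1 := by omega
    show (if i = 1 then 6 else 0) = 0
    simp [h]
  ha := by
    intro i hi
    simp only [Finset.mem_Ico] at hi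
    have h : i ≠ 1 := by omega
    show (if i = 1 then 6 else 0) = 0
    simp [h]
  hRH := by norm_num [Finset.sum_Ico_eq_sum_range]
  hmod := by decide
  hsum := by decide
  hle := fun i => le_refl _
  hcop := by intro i h; by_cases hi : i = 1 <;> simp_all

lemma myeq (A : AdmissibleDatum 2 6) : A = myA0 := by
  obtain ⟨h1, h2, h3, h4⟩ := mychar A
  have hd : A.d = myA0.d := by
    funext i
    by_cases hi : i = 1
    · subst hi; simpa [myA0] using h3
    · rw [A.hd i (by simp [Finset.mem_Ico, h2]; omega)]; simp [myA0, hi]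
  have ha : A.a = myA0.a := by
    funext i
    by_cases hi : i = 1
    · subst hi; simpa [myA0] using h4
    · rw [A.ha i (by simp [Finset.mem_Ico, h2]; omega)]; simp [myA0, hi]
  cases A
  simp_all [myA0]

/-- There is exactly one `(2,6)`-admissible datum, namely `g' = 0`, `N = 2`, `d 1 = 6`,
`a 1 = 6`. -/
theorem admissibleDatum_two_six_unique :
    Nat.card (AdmissibleDatum 2 6) = 1 ∧
    ∀ A : AdmissibleDatum 2 6, A.g' = 0 ∧ A.N = 2 ∧ A.d 1 = 6 ∧ A.a 1 = 6 := by
  refine ⟨?_, mychar⟩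
  rw [Nat.card_eq_one_iff_unique]
  exact ⟨⟨fun A B => (myeq A).trans (myeq B).symm⟩, ⟨myA0⟩⟩
end

section
/- For every natural number n ≥ 7, there are no (2,n)-admissible data. (This is the paper's assertion that the twisted part of the inertia stack of M_{2,n} is empty, and hence the correction term to the stringy Chow group of M_{2,n} vanishes, whenever n ≥ 7.) -/
/-- For every natural number `n ≥ 7`, there are no `(2,n)`-admissible data. -/
theorem admissibleDatum_two_isEmpty (n : ℕ) (hn : 7 ≤ n) :
    IsEmpty (AdmissibleDatum 2 n) := by
  constructor
  rintro ⟨g', N, hN, d, a, hd, ha, hRH, hmod, hsum, hle, hcop⟩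
  have hN0 : 0 < N := by omega
  have key : ∀ i ∈ Finset.Ico 1 N,
      (a i : ℤ) * ((N : ℤ) - 1) ≤
        (d i : ℤ) * (Nat.gcd i N : ℤ) * (((N / Nat.gcd i N : ℕ) : ℤ) - 1) := by
    intro i _
    by_cases hg : Nat.gcd i N = 1
    · rw [hg]
      simp only [Nat.div_one, Nat.cast_one, mul_one]
      have h1 : (a i : ℤ) ≤ (d i : ℤ) := by exact_mod_cast hle i
      have h2 : (1 : ℤ) ≤ (N : ℤ) - 1 := by
        have : (2 : ℤ) ≤ (N : ℤ) := by exact_mod_cast hN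
        linarith
      nlinarith
    · rw [hcop i hg]
      have h1 : 0 < Nat.gcd i N := Nat.gcd_pos_of_pos_right _ hN0
      have h2 : 1 ≤ N / Nat.gcd i N :=
        (Nat.one_le_div_iff h1).mpr (Nat.le_of_dvd hN0 (Nat.gcd_dvd_right i N))
      have h3 : (1 : ℤ) ≤ ((N / Nat.gcd i N : ℕ) : ℤ) := by exact_mod_cast h2
      have : (0 : ℤ) ≤ (d i : ℤ) * (Nat.gcd i N : ℤ) * (((N / Nat.gcd i N : ℕ) : ℤ) - 1) := by
        apply mul_nonneg (mul_nonneg (by positivity) (by positivity))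
        linarith
      simpa using this
  have hsumle := Finset.sum_le_sum key
  rw [← Finset.sum_mul] at hsumle
  have hcast : (∑ i ∈ Finset.Ico 1 N, (a i : ℤ)) = (n : ℤ) := by
    rw [← Nat.cast_sum, hsum]
  rw [hcast] at hsumle
  have hNZ : (2 : ℤ) ≤ (N : ℤ) := by exact_mod_cast hN
  have hnZ : (7 : ℤ) ≤ (n : ℤ) := by exact_mod_cast hn
  have hg' : (0 : ℤ) ≤ (g' : ℤ) := by positivity
  rw [show 2 * ((2:ℕ):ℤ) - 2 = 2 by norm_num] at hRH
  have hb : -(2 * (N:ℤ)) ≤ (N:ℤ) * (2 * (g':ℤ) - 2) := by nlinarith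
  have hc : (7:ℤ) * ((N:ℤ) - 1) ≤ (n:ℤ) * ((N:ℤ) - 1) :=
    mul_le_mul_of_nonneg_right hnZ (by linarith)
  linarith
end

section
/- For every natural number n and every (2,n)-admissible datum, the order N of the cyclic group belongs to {2, 3, 4, 5, 6, 8, 10}. (This is the list of orders of cyclic automorphism groups occurring in the paper's classification table of the twisted sectors of M_2; in particular no (2,n)-admissible datum has N = 7, N = 9, or N ≥ 11.) -/
set_option linter.unusedVariables false

theorem sum_eq_list (S : Finset ℕ) : ∀ (k : ℕ) (d : ℕ → ℕ), (∑ i ∈ S, d i) = k →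
    ∃ l : List ℕ, l.length = k ∧ (∀ x ∈ l, x ∈ S) ∧
      ∀ f : ℕ → ℕ, (∑ i ∈ S, f i * d i) = (l.map f).sum := by
  intro k
  induction k with
  | zero =>
    intro d hd
    refine ⟨[], rfl, by simp, fun f => ?_⟩
    have h0 : ∀ i ∈ S, d i = 0 := by
      intro i hi
      exact (Finset.sum_eq_zero_iff.mp hd) i hi
    simp only [List.map_nil, List.sum_nil]
    exact Finset.sum_eq_zero fun i hi => by rw [h0 i hi, Nat.mul_zero]
  | succ n ih =>
    intro d hd
    have hex : ∃ i0 ∈ S, d i0 ≠ 0 := by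
      by_contra h
      push_neg at h
      rw [Finset.sum_eq_zero h] at hd
      omega
    obtain ⟨i0, hi0, hd0⟩ := hex
    set d' : ℕ → ℕ := Function.update d i0 (d i0 - 1) with hd'
    have hsplit : ∀ g : ℕ → ℕ, ∑ i ∈ S, g i = g i0 + ∑ i ∈ S.erase i0, g i :=
      fun g => (Finset.add_sum_erase S g hi0).symm
    have hsum' : ∑ i ∈ S, d' i = n := by
      have h1 := hsplit d'
      have h2 := hsplit d
      have h3 : ∑ i ∈ S.erase i0, d' i = ∑ i ∈ S.erase i0, d i := by
        refine Finset.sum_congr rfl fun i hi => ?_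
        have : i ≠ i0 := Finset.ne_of_mem_erase hi
        simp [hd', Function.update_of_ne this]
      have h4 : d' i0 = d i0 - 1 := by simp [hd']
      omega
    obtain ⟨l, hl, hlS, hlf⟩ := ih d' hsum'
    refine ⟨i0 :: l, by simp [hl], ?_, fun f => ?_⟩
    · intro x hx
      rcases List.mem_cons.mp hx with h | h
      · exact h ▸ hi0
      · exact hlS x h
    · have h1 := hsplit (fun i => f i * d i)
      have h2 := hsplit (fun i => f i * d' i)
      have h3 : ∑ i ∈ S.erase i0, f i * d' i = ∑ i ∈ S.erase i0, f i * d i := by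
        refine Finset.sum_congr rfl fun i hi => ?_
        have : i ≠ i0 := Finset.ne_of_mem_erase hi
        simp [hd', Function.update_of_ne this]
      have h4 := hlf f
      have h5 : f i0 * d' i0 = f i0 * (d i0 - 1) := by simp [hd']
      have h6 : f i0 * d i0 = f i0 * (d i0 - 1) + f i0 := by
        conv_lhs => rw [show d i0 = (d i0 - 1) + 1 from by omega]
        rw [Nat.mul_add, Nat.mul_one]
      simp only [List.map_cons, List.sum_cons]
      omega
theorem dvd_idx {q x N a : ℕ} (h : Nat.gcd x N = a) (hqa : q ∣ a) : q ∣ x :=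
  hqa.trans (h ▸ Nat.gcd_dvd_left x N)

theorem not_dvd_idx {q x N a : ℕ} (h : Nat.gcd x N = a) (hqN : q ∣ N) (hqa : ¬ q ∣ a) : ¬ q ∣ x :=
  fun hx => hqa (h ▸ Nat.dvd_gcd hx hqN)

theorem two_mul_le_of_dvd {g N : ℕ} (h : g ∣ N) (hlt : g < N) (hp : 0 < N) : 2 * g ≤ N := by
  obtain ⟨m, rfl⟩ := h
  rcases Nat.eq_zero_or_pos g with rfl | hg
  · omega
  · have h2 : 2 ≤ m := by
      by_contra hm
      interval_cases m <;> omega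
    calc 2 * g = g * 2 := by ring
    _ ≤ g * m := Nat.mul_le_mul_left g h2

set_option maxHeartbeats 2000000 in
theorem core3 (N x y z a b c s : ℕ) (hN : 11 ≤ N)
    (ha : a = Nat.gcd x N) (hb : b = Nat.gcd y N) (hc : c = Nat.gcd z N)
    (hs : x + y + z = N * s)
    (hg : a + b + c = N - 2) (o1 : b ≤ a) (o2 : c ≤ b)
    (hx1 : 1 ≤ x) (hxN : x < N) (hy1 : 1 ≤ y) (hyN : y < N) (hz1 : 1 ≤ z) (hzN : z < N) :
    False := by
  have haN : a ∣ N := ha ▸ Nat.gcd_dvd_right x N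
  have hbN : b ∣ N := hb ▸ Nat.gcd_dvd_right y N
  have hcN : c ∣ N := hc ▸ Nat.gcd_dvd_right z N
  have ha1 : 1 ≤ a := ha ▸ Nat.gcd_pos_of_pos_left N hx1
  have hb1 : 1 ≤ b := hb ▸ Nat.gcd_pos_of_pos_left N hy1
  have hc1 : 1 ≤ c := hc ▸ Nat.gcd_pos_of_pos_left N hz1
  have ha2 : 2 * a ≤ N :=
    two_mul_le_of_dvd haN (ha ▸ lt_of_le_of_lt (Nat.gcd_le_left N hx1) hxN) (by omega)
  have hb2 : 2 * b ≤ N :=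
    two_mul_le_of_dvd hbN (hb ▸ lt_of_le_of_lt (Nat.gcd_le_left N hy1) hyN) (by omega)
  have hc2 : 2 * c ≤ N :=
    two_mul_le_of_dvd hcN (hc ▸ lt_of_le_of_lt (Nat.gcd_le_left N hz1) hzN) (by omega)
  obtain ⟨p, hp⟩ := haN
  have hp2 : 2 ≤ p := by
    by_contra hcon
    have : a * p ≤ a * 1 := Nat.mul_le_mul_left a (by omega)
    omega
  have hp3 : p ≤ 3 := by
    by_contra hcon
    have : a * 4 ≤ a * p := Nat.mul_le_mul_left a (by omega)
    omega
  interval_cases p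
  · -- p = 2 : N = 2a
    obtain ⟨q, hq⟩ := hbN
    have hq2 : 2 ≤ q := by
      by_contra hcon
      have : b * q ≤ b * 1 := Nat.mul_le_mul_left b (by omega)
      omega
    have hq6 : q ≤ 6 := by
      by_contra hcon
      have : b * 7 ≤ b * q := Nat.mul_le_mul_left b (by omega)
      omega
    interval_cases q
    · omega
    · -- q = 3 : N = 3b, 6c = N - 12
      obtain ⟨r, hr⟩ := hcN
      have h6c : 6 * c = N - 12 := by omega
      have hr2 : 2 ≤ r := by
        by_contra hcon
        have : c * r ≤ c * 1 := Nat.mul_le_mul_left c (by omega)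
        omega
      have hr18 : r ≤ 18 := by
        by_contra hcon
        have : c * 19 ≤ c * r := Nat.mul_le_mul_left c (by omega)
        omega
      interval_cases r
      · omega
      · omega
      · omega
      · omega
      · omega
      · -- r = 7, N = 84, (42,28,12) : mod 3
        have eN : N = 84 := by omega
        subst eN
        have d1 : 3 ∣ x := dvd_idx (show Nat.gcd x 84 = 42 by omega) (by norm_num)
        have d2 : ¬ 3 ∣ y := not_dvd_idx (show Nat.gcd y 84 = 28 by omega) (by norm_num) (by norm_num)
        have d3 : 3 ∣ z := dvd_idx (show Nat.gcd z 84 = 12 by omega) (by norm_num)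
        omega
      · -- r = 8, N = 48, (24,16,6) : mod 3
        have eN : N = 48 := by omega
        subst eN
        have d1 : 3 ∣ x := dvd_idx (show Nat.gcd x 48 = 24 by omega) (by norm_num)
        have d2 : ¬ 3 ∣ y := not_dvd_idx (show Nat.gcd y 48 = 16 by omega) (by norm_num) (by norm_num)
        have d3 : 3 ∣ z := dvd_idx (show Nat.gcd z 48 = 6 by omega) (by norm_num)
        omega
      · -- r = 9, N = 36, (18,12,4) : mod 4
        have eN : N = 36 := by omega
        subst eN
        have d1 : 2 ∣ x := dvd_idx (show Nat.gcd x 36 = 18 by omega) (by norm_num)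
        have n1 : ¬ 4 ∣ x := not_dvd_idx (show Nat.gcd x 36 = 18 by omega) (by norm_num) (by norm_num)
        have d2 : 4 ∣ y := dvd_idx (show Nat.gcd y 36 = 12 by omega) (by norm_num)
        have d3 : 4 ∣ z := dvd_idx (show Nat.gcd z 36 = 4 by omega) (by norm_num)
        omega
      · -- r = 10, N = 30, (15,10,3) : mod 3
        have eN : N = 30 := by omega
        subst eN
        have d1 : 3 ∣ x := dvd_idx (show Nat.gcd x 30 = 15 by omega) (by norm_num)
        have d2 : ¬ 3 ∣ y := not_dvd_idx (show Nat.gcd y 30 = 10 by omega) (by norm_num) (by norm_num)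
        have d3 : 3 ∣ z := dvd_idx (show Nat.gcd z 30 = 3 by omega) (by norm_num)
        omega
      · omega
      · -- r = 12, N = 24, (12,8,2) : mod 8
        have eN : N = 24 := by omega
        subst eN
        have d1 : 4 ∣ x := dvd_idx (show Nat.gcd x 24 = 12 by omega) (by norm_num)
        have n1 : ¬ 8 ∣ x := not_dvd_idx (show Nat.gcd x 24 = 12 by omega) (by norm_num) (by norm_num)
        have d2 : 8 ∣ y := dvd_idx (show Nat.gcd y 24 = 8 by omega) (by norm_num)
        have d3 : 2 ∣ z := dvd_idx (show Nat.gcd z 24 = 2 by omega) (by norm_num)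
        have n3 : ¬ 4 ∣ z := not_dvd_idx (show Nat.gcd z 24 = 2 by omega) (by norm_num) (by norm_num)
        omega
      · omega
      · omega
      · omega
      · omega
      · omega
      · -- r = 18, N = 18, (9,6,1) : mod 3
        have eN : N = 18 := by omega
        subst eN
        have d1 : 3 ∣ x := dvd_idx (show Nat.gcd x 18 = 9 by omega) (by norm_num)
        have d2 : 3 ∣ y := dvd_idx (show Nat.gcd y 18 = 6 by omega) (by norm_num)
        have n3 : ¬ 3 ∣ z := not_dvd_idx (show Nat.gcd z 18 = 1 by omega) (by norm_num) (by norm_num)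
        omega
    · -- q = 4 : N = 4b, 4c = N - 8
      obtain ⟨r, hr⟩ := hcN
      have h4c : 4 * c = N - 8 := by omega
      have hr2 : 2 ≤ r := by
        by_contra hcon
        have : c * r ≤ c * 1 := Nat.mul_le_mul_left c (by omega)
        omega
      have hr12 : r ≤ 12 := by
        by_contra hcon
        have : c * 13 ≤ c * r := Nat.mul_le_mul_left c (by omega)
        omega
      interval_cases r
      · omega
      · omega
      · omega
      · -- r = 5, N = 40, (20,10,8) : mod 5
        have eN : N = 40 := by omega
        subst eN
        have d1 : 5 ∣ x := dvd_idx (show Nat.gcd x 40 = 20 by omega) (by norm_num)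
        have d2 : 5 ∣ y := dvd_idx (show Nat.gcd y 40 = 10 by omega) (by norm_num)
        have n3 : ¬ 5 ∣ z := not_dvd_idx (show Nat.gcd z 40 = 8 by omega) (by norm_num) (by norm_num)
        omega
      · -- r = 6, N = 24, (12,6,4) : mod 8
        have eN : N = 24 := by omega
        subst eN
        have d1 : 4 ∣ x := dvd_idx (show Nat.gcd x 24 = 12 by omega) (by norm_num)
        have n1 : ¬ 8 ∣ x := not_dvd_idx (show Nat.gcd x 24 = 12 by omega) (by norm_num) (by norm_num)
        have d2 : 2 ∣ y := dvd_idx (show Nat.gcd y 24 = 6 by omega) (by norm_num)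
        have n2 : ¬ 4 ∣ y := not_dvd_idx (show Nat.gcd y 24 = 6 by omega) (by norm_num) (by norm_num)
        have d3 : 4 ∣ z := dvd_idx (show Nat.gcd z 24 = 4 by omega) (by norm_num)
        have n3 : ¬ 8 ∣ z := not_dvd_idx (show Nat.gcd z 24 = 4 by omega) (by norm_num) (by norm_num)
        omega
      · omega
      · -- r = 8, N = 16, (8,4,2) : mod 8
        have eN : N = 16 := by omega
        subst eN
        have d1 : 8 ∣ x := dvd_idx (show Nat.gcd x 16 = 8 by omega) (by norm_num)
        have d2 : 4 ∣ y := dvd_idx (show Nat.gcd y 16 = 4 by omega) (by norm_num)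
        have n2 : ¬ 8 ∣ y := not_dvd_idx (show Nat.gcd y 16 = 4 by omega) (by norm_num) (by norm_num)
        have d3 : 2 ∣ z := dvd_idx (show Nat.gcd z 16 = 2 by omega) (by norm_num)
        have n3 : ¬ 4 ∣ z := not_dvd_idx (show Nat.gcd z 16 = 2 by omega) (by norm_num) (by norm_num)
        omega
      · omega
      · omega
      · omega
      · -- r = 12, N = 12, (6,3,1) : mod 3
        have eN : N = 12 := by omega
        subst eN
        have d1 : 3 ∣ x := dvd_idx (show Nat.gcd x 12 = 6 by omega) (by norm_num)
        have d2 : 3 ∣ y := dvd_idx (show Nat.gcd y 12 = 3 by omega) (by norm_num)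
        have n3 : ¬ 3 ∣ z := not_dvd_idx (show Nat.gcd z 12 = 1 by omega) (by norm_num) (by norm_num)
        omega
    · -- q = 5 : N = 20, (10,4,4) : mod 4
      have eN : N = 20 := by omega
      subst eN
      have d1 : 2 ∣ x := dvd_idx (show Nat.gcd x 20 = 10 by omega) (by norm_num)
      have n1 : ¬ 4 ∣ x := not_dvd_idx (show Nat.gcd x 20 = 10 by omega) (by norm_num) (by norm_num)
      have d2 : 4 ∣ y := dvd_idx (show Nat.gcd y 20 = 4 by omega) (by norm_num)
      have d3 : 4 ∣ z := dvd_idx (show Nat.gcd z 20 = 4 by omega) (by norm_num)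
      omega
    · -- q = 6 : N = 12, (6,2,2) : mod 4
      have eN : N = 12 := by omega
      subst eN
      have d1 : 2 ∣ x := dvd_idx (show Nat.gcd x 12 = 6 by omega) (by norm_num)
      have n1 : ¬ 4 ∣ x := not_dvd_idx (show Nat.gcd x 12 = 6 by omega) (by norm_num) (by norm_num)
      have d2 : 2 ∣ y := dvd_idx (show Nat.gcd y 12 = 2 by omega) (by norm_num)
      have n2 : ¬ 4 ∣ y := not_dvd_idx (show Nat.gcd y 12 = 2 by omega) (by norm_num) (by norm_num)
      have d3 : 2 ∣ z := dvd_idx (show Nat.gcd z 12 = 2 by omega) (by norm_num)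
      have n3 : ¬ 4 ∣ z := not_dvd_idx (show Nat.gcd z 12 = 2 by omega) (by norm_num) (by norm_num)
      omega
  · -- p = 3 : N = 3a
    obtain ⟨q, hq⟩ := hbN
    have hq3 : 3 ≤ q := by
      by_contra hcon
      have : b * q ≤ b * 2 := Nat.mul_le_mul_left b (by omega)
      omega
    have hq9 : q ≤ 9 := by
      by_contra hcon
      have : b * 10 ≤ b * q := Nat.mul_le_mul_left b (by omega)
      omega
    interval_cases q
    · -- q = 3 : b = a, 3c = N - 6
      obtain ⟨r, hr⟩ := hcN
      have h3c : 3 * c = N - 6 := by omega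
      have hr2 : 2 ≤ r := by
        by_contra hcon
        have : c * r ≤ c * 1 := Nat.mul_le_mul_left c (by omega)
        omega
      have hr9 : r ≤ 9 := by
        by_contra hcon
        have : c * 10 ≤ c * r := Nat.mul_le_mul_left c (by omega)
        omega
      interval_cases r
      · omega
      · omega
      · -- r = 4, N = 24, (8,8,6) : mod 8
        have eN : N = 24 := by omega
        subst eN
        have d1 : 8 ∣ x := dvd_idx (show Nat.gcd x 24 = 8 by omega) (by norm_num)
        have d2 : 8 ∣ y := dvd_idx (show Nat.gcd y 24 = 8 by omega) (by norm_num)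
        have d3 : 2 ∣ z := dvd_idx (show Nat.gcd z 24 = 6 by omega) (by norm_num)
        have n3 : ¬ 4 ∣ z := not_dvd_idx (show Nat.gcd z 24 = 6 by omega) (by norm_num) (by norm_num)
        omega
      · -- r = 5, N = 15, (5,5,3) : mod 5
        have eN : N = 15 := by omega
        subst eN
        have d1 : 5 ∣ x := dvd_idx (show Nat.gcd x 15 = 5 by omega) (by norm_num)
        have d2 : 5 ∣ y := dvd_idx (show Nat.gcd y 15 = 5 by omega) (by norm_num)
        have n3 : ¬ 5 ∣ z := not_dvd_idx (show Nat.gcd z 15 = 3 by omega) (by norm_num) (by norm_num)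
        omega
      · -- r = 6, N = 12, (4,4,2) : mod 4
        have eN : N = 12 := by omega
        subst eN
        have d1 : 4 ∣ x := dvd_idx (show Nat.gcd x 12 = 4 by omega) (by norm_num)
        have d2 : 4 ∣ y := dvd_idx (show Nat.gcd y 12 = 4 by omega) (by norm_num)
        have d3 : 2 ∣ z := dvd_idx (show Nat.gcd z 12 = 2 by omega) (by norm_num)
        have n3 : ¬ 4 ∣ z := not_dvd_idx (show Nat.gcd z 12 = 2 by omega) (by norm_num) (by norm_num)
        omega
      · omega
      · omega
      · omega
    · -- q = 4 : N = 12, (4,3,3) : mod 3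
      have eN : N = 12 := by omega
      subst eN
      have n1 : ¬ 3 ∣ x := not_dvd_idx (show Nat.gcd x 12 = 4 by omega) (by norm_num) (by norm_num)
      have d2 : 3 ∣ y := dvd_idx (show Nat.gcd y 12 = 3 by omega) (by norm_num)
      have d3 : 3 ∣ z := dvd_idx (show Nat.gcd z 12 = 3 by omega) (by norm_num)
      omega
    · omega
    · omega
    · omega
    · omega
    · omega
set_option maxHeartbeats 1000000 in
theorem core4 (N x y z w a b c e s : ℕ) (hN : 11 ≤ N)
    (ha : a = Nat.gcd x N) (hb : b = Nat.gcd y N) (hc : c = Nat.gcd z N) (he : e = Nat.gcd w N)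
    (hs : x + y + z + w = N * s)
    (hg : a + b + c + e = 2 * N - 2)
    (hx1 : 1 ≤ x) (hxN : x < N) (hy1 : 1 ≤ y) (hyN : y < N)
    (hz1 : 1 ≤ z) (hzN : z < N) (hw1 : 1 ≤ w) (hwN : w < N) : False := by
  have haN : a ∣ N := ha ▸ Nat.gcd_dvd_right x N
  have hbN : b ∣ N := hb ▸ Nat.gcd_dvd_right y N
  have hcN : c ∣ N := hc ▸ Nat.gcd_dvd_right z N
  have heN : e ∣ N := he ▸ Nat.gcd_dvd_right w N
  have ha1 : 1 ≤ a := ha ▸ Nat.gcd_pos_of_pos_left N hx1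
  have hb1 : 1 ≤ b := hb ▸ Nat.gcd_pos_of_pos_left N hy1
  have hc1 : 1 ≤ c := hc ▸ Nat.gcd_pos_of_pos_left N hz1
  have he1 : 1 ≤ e := he ▸ Nat.gcd_pos_of_pos_left N hw1
  have ha2 : 2 * a ≤ N :=
    two_mul_le_of_dvd haN (ha ▸ lt_of_le_of_lt (Nat.gcd_le_left N hx1) hxN) (by omega)
  have hb2 : 2 * b ≤ N :=
    two_mul_le_of_dvd hbN (hb ▸ lt_of_le_of_lt (Nat.gcd_le_left N hy1) hyN) (by omega)
  have hc2 : 2 * c ≤ N :=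
    two_mul_le_of_dvd hcN (hc ▸ lt_of_le_of_lt (Nat.gcd_le_left N hz1) hzN) (by omega)
  have he2 : 2 * e ≤ N :=
    two_mul_le_of_dvd heN (he ▸ lt_of_le_of_lt (Nat.gcd_le_left N hw1) hwN) (by omega)
  have alt : ∀ g : ℕ, g ∣ N → 1 ≤ g → 2 * g ≤ N → N ≤ 2 * g + 4 → (2 * g = N ∨ (g = 4 ∧ N = 12)) := by
    intro g hgN hg1 hg2 hg4
    obtain ⟨m, hm⟩ := hgN
    have hm2 : 2 ≤ m := by
      by_contra hcon
      have : g * m ≤ g * 1 := Nat.mul_le_mul_left g (by omega)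
      omega
    rcases Nat.eq_or_lt_of_le hm2 with h2 | h3
    · subst h2
      left
      omega
    · have h3' : g * 3 ≤ g * m := Nat.mul_le_mul_left g (by omega)
      have hg4' : g ≤ 4 := by omega
      interval_cases g <;> omega
  have alta := alt a haN ha1 ha2 (by omega)
  have altb := alt b hbN hb1 hb2 (by omega)
  have altc := alt c hcN hc1 hc2 (by omega)
  have alte := alt e heN he1 he2 (by omega)
  have hN12 : N = 12 := by
    rcases alta with h1 | h1 <;> rcases altb with h2 | h2 <;> rcases altc with h3 | h3 <;>
      rcases alte with h4 | h4 <;> omega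
  subst hN12
  have ea : a = 4 ∨ a = 6 := by rcases alta with h | h <;> omega
  have eb : b = 4 ∨ b = 6 := by rcases altb with h | h <;> omega
  have ec : c = 4 ∨ c = 6 := by rcases altc with h | h <;> omega
  have ee : e = 4 ∨ e = 6 := by rcases alte with h | h <;> omega
  have hwhich : (a = 4 ∧ b = 6 ∧ c = 6 ∧ e = 6) ∨ (b = 4 ∧ a = 6 ∧ c = 6 ∧ e = 6) ∨
      (c = 4 ∧ a = 6 ∧ b = 6 ∧ e = 6) ∨ (e = 4 ∧ a = 6 ∧ b = 6 ∧ c = 6) := by omega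
  rcases hwhich with ⟨u1, u2, u3, u4⟩ | ⟨u1, u2, u3, u4⟩ | ⟨u1, u2, u3, u4⟩ | ⟨u1, u2, u3, u4⟩
  · have n1 : ¬ 3 ∣ x := not_dvd_idx (show Nat.gcd x 12 = 4 by omega) (by norm_num) (by norm_num)
    have d2 : 3 ∣ y := dvd_idx (show Nat.gcd y 12 = 6 by omega) (by norm_num)
    have d3 : 3 ∣ z := dvd_idx (show Nat.gcd z 12 = 6 by omega) (by norm_num)
    have d4 : 3 ∣ w := dvd_idx (show Nat.gcd w 12 = 6 by omega) (by norm_num)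
    omega
  · have n1 : ¬ 3 ∣ y := not_dvd_idx (show Nat.gcd y 12 = 4 by omega) (by norm_num) (by norm_num)
    have d2 : 3 ∣ x := dvd_idx (show Nat.gcd x 12 = 6 by omega) (by norm_num)
    have d3 : 3 ∣ z := dvd_idx (show Nat.gcd z 12 = 6 by omega) (by norm_num)
    have d4 : 3 ∣ w := dvd_idx (show Nat.gcd w 12 = 6 by omega) (by norm_num)
    omega
  · have n1 : ¬ 3 ∣ z := not_dvd_idx (show Nat.gcd z 12 = 4 by omega) (by norm_num) (by norm_num)
    have d2 : 3 ∣ x := dvd_idx (show Nat.gcd x 12 = 6 by omega) (by norm_num)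
    have d3 : 3 ∣ y := dvd_idx (show Nat.gcd y 12 = 6 by omega) (by norm_num)
    have d4 : 3 ∣ w := dvd_idx (show Nat.gcd w 12 = 6 by omega) (by norm_num)
    omega
  · have n1 : ¬ 3 ∣ w := not_dvd_idx (show Nat.gcd w 12 = 4 by omega) (by norm_num) (by norm_num)
    have d2 : 3 ∣ x := dvd_idx (show Nat.gcd x 12 = 6 by omega) (by norm_num)
    have d3 : 3 ∣ y := dvd_idx (show Nat.gcd y 12 = 6 by omega) (by norm_num)
    have d4 : 3 ∣ z := dvd_idx (show Nat.gcd z 12 = 6 by omega) (by norm_num)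
    omega
theorem kill3 (N x y z s : ℕ) (hN : 11 ≤ N)
    (hx1 : 1 ≤ x) (hxN : x < N) (hy1 : 1 ≤ y) (hyN : y < N) (hz1 : 1 ≤ z) (hzN : z < N)
    (hs : x + y + z = N * s)
    (hg : Nat.gcd x N + Nat.gcd y N + Nat.gcd z N = N - 2) : False := by
  rcases le_total (Nat.gcd y N) (Nat.gcd x N) with h1 | h1
  · rcases le_total (Nat.gcd z N) (Nat.gcd y N) with h2 | h2
    · exact core3 N x y z _ _ _ s hN rfl rfl rfl hs hg h1 h2 hx1 hxN hy1 hyN hz1 hzN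
    · rcases le_total (Nat.gcd z N) (Nat.gcd x N) with h3 | h3
      · exact core3 N x z y _ _ _ s hN rfl rfl rfl (by omega) (by omega) h3 h2 hx1 hxN hz1 hzN hy1 hyN
      · exact core3 N z x y _ _ _ s hN rfl rfl rfl (by omega) (by omega) h3 h1 hz1 hzN hx1 hxN hy1 hyN
  · rcases le_total (Nat.gcd z N) (Nat.gcd x N) with h2 | h2
    · exact core3 N y x z _ _ _ s hN rfl rfl rfl (by omega) (by omega) h1 h2 hy1 hyN hx1 hxN hz1 hzN
    · rcases le_total (Nat.gcd z N) (Nat.gcd y N) with h3 | h3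
      · exact core3 N y z x _ _ _ s hN rfl rfl rfl (by omega) (by omega) h3 h2 hy1 hyN hz1 hzN hx1 hxN
      · exact core3 N z y x _ _ _ s hN rfl rfl rfl (by omega) (by omega) h3 h1 hz1 hzN hy1 hyN hx1 hxN

set_option maxHeartbeats 1000000 in
/-- For every natural number `n` and every `(2,n)`-admissible datum, the order `N` of the
cyclic group belongs to `{2, 3, 4, 5, 6, 8, 10}`. -/
theorem admissibleDatum_two_N_mem (n : ℕ) (A : AdmissibleDatum 2 n) :
    A.N ∈ ({2, 3, 4, 5, 6, 8, 10} : Finset ℕ) := by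
  obtain ⟨g', N, hN, d, a, hd, ha, hRH, hmod, hsuma, hlea, hcop⟩ := A
  simp only [Finset.mem_insert, Finset.mem_singleton]
  by_contra hcon
  push_neg at hcon
  have hNpos : 0 < N := by omega
  have hgcdle : ∀ i ∈ Finset.Ico 1 N, Nat.gcd i N ≤ N :=
    fun i _ => Nat.le_of_dvd hNpos (Nat.gcd_dvd_right i N)
  have hterm : ∀ i ∈ Finset.Ico 1 N,
      (d i : ℤ) * (Nat.gcd i N : ℤ) * (((N / Nat.gcd i N : ℕ) : ℤ) - 1) =
        (d i : ℤ) * ((N : ℤ) - (Nat.gcd i N : ℤ)) := by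
    intro i _
    have hmul : Nat.gcd i N * (N / Nat.gcd i N) = N := Nat.mul_div_cancel' (Nat.gcd_dvd_right i N)
    have h2 : (Nat.gcd i N : ℤ) * ((N / Nat.gcd i N : ℕ) : ℤ) = (N : ℤ) := by exact_mod_cast hmul
    linear_combination (d i : ℤ) * h2
  rw [Finset.sum_congr rfl hterm] at hRH
  norm_num at hRH
  have hsz : ((∑ i ∈ Finset.Ico 1 N, d i * (N - Nat.gcd i N) : ℕ) : ℤ) =
      ∑ i ∈ Finset.Ico 1 N, (d i : ℤ) * ((N : ℤ) - (Nat.gcd i N : ℤ)) := by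
    rw [Nat.cast_sum]
    refine Finset.sum_congr rfl fun i hi => ?_
    rw [Nat.cast_mul, Nat.cast_sub (hgcdle i hi)]
  have hg' : 2 ≤ g' ∨ g' = 1 ∨ g' = 0 := by omega
  rcases hg' with hg2 | hg1 | hg0
  · -- g' ≥ 2 : impossible
    have h1 : (2 : ℤ) ≤ (g' : ℤ) := by exact_mod_cast hg2
    have h2 : (2 : ℤ) ≤ (N : ℤ) := by exact_mod_cast hN
    have hnn : 0 ≤ ∑ i ∈ Finset.Ico 1 N, (d i : ℤ) * ((N : ℤ) - (Nat.gcd i N : ℤ)) := by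
      refine Finset.sum_nonneg fun i hi => mul_nonneg (by positivity) ?_
      have := hgcdle i hi
      have : (Nat.gcd i N : ℤ) ≤ (N : ℤ) := by exact_mod_cast this
      omega
    have h3 : (N : ℤ) * 2 ≤ (N : ℤ) * (2 * (g' : ℤ) - 2) :=
      mul_le_mul_of_nonneg_left (by linarith) (by positivity)
    linarith [hRH, hnn, h3]
  · -- g' = 1 : N ≤ 4
    subst hg1
    have hT : ∑ i ∈ Finset.Ico 1 N, d i * (N - Nat.gcd i N) = 2 := by
      have h2 : ((∑ i ∈ Finset.Ico 1 N, d i * (N - Nat.gcd i N) : ℕ) : ℤ) = 2 := by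
        rw [hsz]
        push_cast at hRH
        linarith
      exact_mod_cast h2
    have hex : ∃ i0 ∈ Finset.Ico 1 N, d i0 * (N - Nat.gcd i0 N) ≠ 0 := by
      by_contra hh
      push_neg at hh
      rw [Finset.sum_eq_zero hh] at hT
      omega
    obtain ⟨i0, hi0, hne⟩ := hex
    have hle2 : d i0 * (N - Nat.gcd i0 N) ≤ 2 := by
      have := Finset.single_le_sum (f := fun i => d i * (N - Nat.gcd i N))
        (fun i _ => Nat.zero_le _) hi0
      rw [hT] at this
      exact this
    rw [Finset.mem_Ico] at hi0
    have h2g : 2 * Nat.gcd i0 N ≤ N :=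
      two_mul_le_of_dvd (Nat.gcd_dvd_right i0 N)
        (lt_of_le_of_lt (Nat.gcd_le_left N hi0.1) hi0.2) hNpos
    have hd0 : 0 < d i0 := by
      rcases Nat.eq_zero_or_pos (d i0) with h | h
      · exact absurd (by rw [h, Nat.zero_mul]) hne
      · exact h
    have hfac : (N - Nat.gcd i0 N) ≤ d i0 * (N - Nat.gcd i0 N) :=
      Nat.le_mul_of_pos_left _ hd0
    have hgpos : 0 < Nat.gcd i0 N := Nat.gcd_pos_of_pos_left N hi0.1
    omega
  · -- g' = 0
    subst hg0
    have hT : ∑ i ∈ Finset.Ico 1 N, d i * (N - Nat.gcd i N) = 2 * N + 2 := by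
      have h2 : ((∑ i ∈ Finset.Ico 1 N, d i * (N - Nat.gcd i N) : ℕ) : ℤ) = 2 * (N : ℤ) + 2 := by
        rw [hsz]
        push_cast at hRH
        linarith
      exact_mod_cast h2
    by_cases hsmall : N ≤ 10
    · -- only need to exclude N = 7, 9
      have h7 : N ≠ 7 := by
        intro h
        rw [h] at hT
        have e : Finset.Ico 1 7 = {1, 2, 3, 4, 5, 6} := by decide
        rw [e] at hT
        norm_num [Finset.sum_insert, Finset.mem_insert, Finset.mem_singleton] at hT
        omega
      have h9 : N ≠ 9 := by
        intro h
        rw [h] at hT hmod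
        have hm : (9 : ℕ) ∣ ∑ i ∈ Finset.Ico 1 9, i * d i :=
          (ZMod.natCast_eq_zero_iff _ 9).mp hmod
        have e : Finset.Ico 1 9 = {1, 2, 3, 4, 5, 6, 7, 8} := by decide
        rw [e] at hT hm
        norm_num [Finset.sum_insert, Finset.mem_insert, Finset.mem_singleton] at hT hm
        obtain ⟨u, hu⟩ := hm
        have hone : d 1 + d 2 + d 4 + d 5 + d 7 + d 8 = 1 := by omega
        have hX : ¬ ((3 : ℕ) ∣ (d 1 + 2 * d 2 + 4 * d 4 + 5 * d 5 + 7 * d 7 + 8 * d 8)) := by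
          rcases Nat.eq_zero_or_pos (d 1) with h1 | h1
          · rcases Nat.eq_zero_or_pos (d 2) with h2 | h2
            · rcases Nat.eq_zero_or_pos (d 4) with h4 | h4
              · rcases Nat.eq_zero_or_pos (d 5) with h5 | h5
                · rcases Nat.eq_zero_or_pos (d 7) with h7 | h7 <;> omega
                · omega
              · omega
            · omega
          · omega
        exact hX ⟨3 * u - (d 3 + 2 * d 6), by omega⟩
      omega
    · -- N ≥ 11
      push_neg at hsmall
      haveI : NeZero N := ⟨by omega⟩
      have hdvdsum : N ∣ ∑ i ∈ Finset.Ico 1 N, i * d i :=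
        (ZMod.natCast_eq_zero_iff _ _).mp hmod
      obtain ⟨s, hs⟩ := hdvdsum
      have h2gall : ∀ i ∈ Finset.Ico 1 N, 2 * Nat.gcd i N ≤ N := by
        intro i hi
        rw [Finset.mem_Ico] at hi
        exact two_mul_le_of_dvd (Nat.gcd_dvd_right i N)
          (lt_of_le_of_lt (Nat.gcd_le_left N hi.1) hi.2) hNpos
      have hk4 : ∑ i ∈ Finset.Ico 1 N, d i ≤ 4 := by
        by_contra hcon5
        have h5 : 5 ≤ ∑ i ∈ Finset.Ico 1 N, d i := by omega
        have hbig : ∀ i ∈ Finset.Ico 1 N, d i * N ≤ 2 * (d i * (N - Nat.gcd i N)) := by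
          intro i hi
          have h1 := h2gall i hi
          have h2 := hgcdle i hi
          calc d i * N ≤ d i * (2 * (N - Nat.gcd i N)) := Nat.mul_le_mul_left (d i) (by omega)
          _ = 2 * (d i * (N - Nat.gcd i N)) := by ring
        have hsum1 : ∑ i ∈ Finset.Ico 1 N, d i * N ≤
            ∑ i ∈ Finset.Ico 1 N, 2 * (d i * (N - Nat.gcd i N)) := Finset.sum_le_sum hbig
        rw [← Finset.sum_mul, ← Finset.mul_sum, hT] at hsum1
        have h5N : 5 * N ≤ (∑ i ∈ Finset.Ico 1 N, d i) * N := Nat.mul_le_mul_right N h5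
        omega
      have hk3 : 3 ≤ ∑ i ∈ Finset.Ico 1 N, d i := by
        have hsm : ∀ i ∈ Finset.Ico 1 N, d i * (N - Nat.gcd i N) ≤ d i * (N - 1) := by
          intro i hi
          rw [Finset.mem_Ico] at hi
          have : 0 < Nat.gcd i N := Nat.gcd_pos_of_pos_left N hi.1
          exact Nat.mul_le_mul_left (d i) (by omega)
        have hsum2 : ∑ i ∈ Finset.Ico 1 N, d i * (N - Nat.gcd i N) ≤
            ∑ i ∈ Finset.Ico 1 N, d i * (N - 1) := Finset.sum_le_sum hsm
        rw [hT, ← Finset.sum_mul] at hsum2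
        by_contra hcon3
        have h2' : (∑ i ∈ Finset.Ico 1 N, d i) * (N - 1) ≤ 2 * (N - 1) :=
          Nat.mul_le_mul_right (N - 1) (by omega)
        omega
      obtain ⟨l, hlen, hlS, hlf⟩ := sum_eq_list (Finset.Ico 1 N) (∑ i ∈ Finset.Ico 1 N, d i) d rfl
      have hgsum : (l.map fun i => N - Nat.gcd i N).sum = 2 * N + 2 := by
        rw [← hlf fun i => N - Nat.gcd i N, ← hT]
        exact Finset.sum_congr rfl fun i _ => Nat.mul_comm _ _
      have hisum : (l.map fun i => i).sum = N * s := by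
        rw [← hlf fun i => i, ← hs]
      have hk34 : l.length = 3 ∨ l.length = 4 := by omega
      rcases hk34 with h3 | h4
      · obtain ⟨x, y, z, rfl⟩ := List.length_eq_three.mp h3
        have hx := hlS x (by simp)
        have hy := hlS y (by simp)
        have hz := hlS z (by simp)
        rw [Finset.mem_Ico] at hx hy hz
        simp only [List.map_cons, List.map_nil, List.sum_cons, List.sum_nil] at hgsum hisum
        have hgx := hgcdle x (by rw [Finset.mem_Ico]; exact hx)
        have hgy := hgcdle y (by rw [Finset.mem_Ico]; exact hy)
        have hgz := hgcdle z (by rw [Finset.mem_Ico]; exact hz)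
        have hgs : Nat.gcd x N + Nat.gcd y N + Nat.gcd z N = N - 2 := by omega
        exact kill3 N x y z s (by omega) hx.1 hx.2 hy.1 hy.2 hz.1 hz.2 (by omega) hgs
      · rcases l with _ | ⟨x, l1⟩
        · simp at h4
        have h3' : l1.length = 3 := by simpa using h4
        obtain ⟨y, z, w, rfl⟩ := List.length_eq_three.mp h3'
        have hx := hlS x (by simp)
        have hy := hlS y (by simp)
        have hz := hlS z (by simp)
        have hw := hlS w (by simp)
        rw [Finset.mem_Ico] at hx hy hz hw
        simp only [List.map_cons, List.map_nil, List.sum_cons, List.sum_nil] at hgsum hisum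
        have hgx := hgcdle x (by rw [Finset.mem_Ico]; exact hx)
        have hgy := hgcdle y (by rw [Finset.mem_Ico]; exact hy)
        have hgz := hgcdle z (by rw [Finset.mem_Ico]; exact hz)
        have hgw := hgcdle w (by rw [Finset.mem_Ico]; exact hw)
        have hgs : Nat.gcd x N + Nat.gcd y N + Nat.gcd z N + Nat.gcd w N = 2 * N - 2 := by omega
        exact core4 N x y z w _ _ _ _ s (by omega) rfl rfl rfl rfl (by omega) hgs
          hx.1 hx.2 hy.1 hy.2 hz.1 hz.2 hw.1 hw.2
end
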